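/- arXiv:1704.08796 — 2 statements merged into one kernel-verified Lean document; each statement's English description precedes it below -/
import Mathlib

section
/- Let G be a simple brick with a removable doubleton R, and let H := G − R be its underlying bipartite graph. Then for every vertex b of G, at most two of the edges of H incident with b are non-removable in H. -/
/-! Preamble: definitions for matching covered graphs, bricks, removable
doubletons, R-compatible/R-thin edges, retracts, ladders, partial biwheels,
R-configurations, and the eleven infinite families. -/

/-- The graph has a perfect matching. -/
def HasPerfMatching {V : Type*} (G : SimpleGraph V) : Prop :=
  ∃ M : G.Subgraph, M.IsPerfectMatching

/-- A graph (with at least two vertices) is matching covered if it is connected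
and each of its edges lies in some perfect matching. -/
def MatchingCovered {V : Type*} (G : SimpleGraph V) : Prop :=
  2 ≤ Nat.card V ∧ G.Connected ∧
    ∀ e ∈ G.edgeSet, ∃ M : G.Subgraph, M.IsPerfectMatching ∧ e ∈ M.edgeSet

/-- An edge of a matching covered graph is removable if deleting it leaves a
matching covered graph. -/
def RemovableEdge {V : Type*} (G : SimpleGraph V) (e : Sym2 V) : Prop :=
  e ∈ G.edgeSet ∧ MatchingCovered (G.deleteEdges {e})

/-- The number of odd connected components. -/
noncomputable def oddCompCount {V : Type*} (G : SimpleGraph V) : ℕ :=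
  Nat.card {c : G.ConnectedComponent // Odd (Nat.card c.supp)}

/-- `S` is a barrier of `G`: `S` is nonempty and the number of odd components
of `G − S` equals `|S|`. -/
def IsBarrierOf {V : Type*} (G : SimpleGraph V) (S : Set V) : Prop :=
  S.Nonempty ∧ oddCompCount (G.induce (Sᶜ : Set V)) = S.ncard

/-- Bicritical: at least four vertices, and deleting any two distinct vertices
leaves a graph with a perfect matching. -/
def BicriticalGraph {V : Type*} (G : SimpleGraph V) : Prop :=
  4 ≤ Nat.card V ∧ ∀ u v : V, u ≠ v →
    HasPerfMatching (G.induce (({u, v} : Set V)ᶜ))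

/-- 3-connected: at least four vertices, and deleting any set of at most two
vertices leaves a connected graph. -/
def ThreeConnectedGraph {V : Type*} (G : SimpleGraph V) : Prop :=
  4 ≤ Nat.card V ∧ ∀ S : Set V, S.ncard ≤ 2 → (G.induce (Sᶜ : Set V)).Connected

/-- A brick is a 3-connected bicritical graph. -/
def BrickGraph {V : Type*} (G : SimpleGraph V) : Prop :=
  ThreeConnectedGraph G ∧ BicriticalGraph G

/-- `A`, `B` form a bipartition of `G`. -/
def BipartitionOf {V : Type*} (G : SimpleGraph V) (A B : Set V) : Prop :=
  A ∪ B = Set.univ ∧ Disjoint A B ∧ ∀ ⦃u v : V⦄, G.Adj u v → (u ∈ A ↔ v ∈ B)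

/-- `G` is bipartite. -/
def BipartiteGraph {V : Type*} (G : SimpleGraph V) : Prop :=
  ∃ A B : Set V, BipartitionOf G A B

/-- `{α, β}` is a removable doubleton of `G`: a pair of distinct edges whose
deletion leaves a bipartite matching covered graph. -/
def RemovableDoubleton {V : Type*} (G : SimpleGraph V) (α β : Sym2 V) : Prop :=
  α ≠ β ∧ α ∈ G.edgeSet ∧ β ∈ G.edgeSet ∧
    BipartiteGraph (G.deleteEdges {α, β}) ∧ MatchingCovered (G.deleteEdges {α, β})

/-- An `R`-brick: a brick with a fixed removable doubleton `R = {α, β}`. -/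
def RBrick {V : Type*} (G : SimpleGraph V) (α β : Sym2 V) : Prop :=
  BrickGraph G ∧ RemovableDoubleton G α β

/-- `V(R)`: the set of the four ends of the doubleton edges. -/
def VR {V : Type*} (α β : Sym2 V) : Set V := {v | v ∈ α ∨ v ∈ β}

/-- `e` is `R`-compatible: it is an edge of `H := G − R` and is removable in
both `G` and `H`. -/
def RCompatible {V : Type*} (G : SimpleGraph V) (α β e : Sym2 V) : Prop :=
  e ∈ (G.deleteEdges {α, β}).edgeSet ∧
    MatchingCovered (G.deleteEdges {e}) ∧
    MatchingCovered ((G.deleteEdges {α, β}).deleteEdges {e})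

/-- `e` is `R`-thin: `R`-compatible, and every barrier of `G − e` has at most
two vertices. -/
def RThin {V : Type*} (G : SimpleGraph V) (α β e : Sym2 V) : Prop :=
  RCompatible G α β e ∧
    ∀ S : Set V, IsBarrierOf (G.deleteEdges {e}) S → S.ncard ≤ 2

/-- The number of maximal nontrivial barriers of a graph. -/
noncomputable def barrierIndex {V : Type*} (G : SimpleGraph V) : ℕ :=
  Set.ncard {S : Set V | IsBarrierOf G S ∧ 2 ≤ S.ncard ∧
    ∀ T : Set V, IsBarrierOf G T → S ⊆ T → T = S}

/-- Degree of a vertex (as the cardinality of its neighbourhood). -/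
noncomputable def degOf {V : Type*} (G : SimpleGraph V) (v : V) : ℕ :=
  (G.neighborSet v).ncard

/-- The relation identifying each degree-two vertex with its neighbours
(bicontraction of all degree-two vertices at once). -/
def bicontractPairRel {V : Type*} (G : SimpleGraph V) (u v : V) : Prop :=
  G.Adj u v ∧ (degOf G u = 2 ∨ degOf G v = 2)

/-- The vertex identifications performed when taking the retract. -/
def retractSetoid {V : Type*} (G : SimpleGraph V) : Setoid V :=
  Relation.EqvGen.setoid (bicontractPairRel G)

/-- The retract of `G` (as a simple graph on the quotient). -/
def retractGraph {V : Type*} (G : SimpleGraph V) :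
    SimpleGraph (Quotient (retractSetoid G)) where
  Adj X Y := X ≠ Y ∧ ∃ u v : V,
    Quotient.mk (retractSetoid G) u = X ∧ Quotient.mk (retractSetoid G) v = Y ∧ G.Adj u v
  symm := by
    constructor
    rintro X Y ⟨hne, u, v, hu, hv, huv⟩
    exact ⟨hne.symm, v, u, hv, hu, huv.symm⟩
  loopless := by
    constructor
    rintro X ⟨hne, -⟩
    exact hne rfl

/-- The retract of `G` has a pair of parallel edges. -/
def retractHasParallel {V : Type*} (G : SimpleGraph V) : Prop :=
  ∃ p q p' q' : V, G.Adj p q ∧ G.Adj p' q' ∧ s(p, q) ≠ s(p', q') ∧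
    ¬ Relation.EqvGen (bicontractPairRel G) p q ∧
    ((Relation.EqvGen (bicontractPairRel G) p p' ∧
        Relation.EqvGen (bicontractPairRel G) q q') ∨
     (Relation.EqvGen (bicontractPairRel G) p q' ∧
        Relation.EqvGen (bicontractPairRel G) q p'))

/-- `e` is strictly `R`-thin: `R`-thin and the retract of `G − e` has no
parallel edges. -/
def StrictlyRThin {V : Type*} (G : SimpleGraph V) (α β e : Sym2 V) : Prop :=
  RThin G α β e ∧ ¬ retractHasParallel (G.deleteEdges {e})

/-- The ladder with `m` rungs: two paths `x₀…x_{m-1}` (first coordinate `0`)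
and `y₀…y_{m-1}` (first coordinate `1`) together with the rungs `xᵢyᵢ`. -/
def ladderGraph (m : ℕ) : SimpleGraph (Fin 2 × Fin m) :=
  SimpleGraph.fromRel (fun p q =>
    (p.1 = q.1 ∧ p.2.val + 1 = q.2.val) ∨ (p.1 ≠ q.1 ∧ p.2 = q.2))

/-- The partial biwheel on the odd path `x₀…x_{2k-1}` (the `inl` vertices)
with hubs `u = inr 0` (joined to the even-indexed path vertices) and
`w = inr 1` (joined to the odd-indexed path vertices). -/
def biwheelGraph (k : ℕ) : SimpleGraph (Fin (2 * k) ⊕ Fin 2) :=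
  SimpleGraph.fromRel (fun p q =>
    match p, q with
    | Sum.inl i, Sum.inl j => i.val + 1 = j.val
    | Sum.inr h, Sum.inl i => (h = 0 ∧ i.val % 2 = 0) ∨ (h = 1 ∧ i.val % 2 = 1)
    | _, _ => False)

/-- The subgraph `K` of `Γ` is a ladder with `m` rungs and corners `a u b w`:
`au` and `bw` are its external rungs, labelled according to the convention
that `a` and `w` lie in one colour class and `b` and `u` in the other. -/
def LadderOn {W : Type*} (Γ : SimpleGraph W) (K : Γ.Subgraph) (m : ℕ)
    (a u b w : W) : Prop :=
  ∃ (hm : 3 ≤ m) (φ : ladderGraph m ≃g K.coe),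
    (φ ((0 : Fin 2), (⟨0, by omega⟩ : Fin m))).val = a ∧
    (φ ((1 : Fin 2), (⟨0, by omega⟩ : Fin m))).val = u ∧
    (if m % 2 = 1 then
        (φ ((0 : Fin 2), (⟨m - 1, by omega⟩ : Fin m))).val = w ∧
        (φ ((1 : Fin 2), (⟨m - 1, by omega⟩ : Fin m))).val = b
      else
        (φ ((1 : Fin 2), (⟨m - 1, by omega⟩ : Fin m))).val = w ∧
        (φ ((0 : Fin 2), (⟨m - 1, by omega⟩ : Fin m))).val = b)

/-- The subgraph `K` of `Γ` is a partial biwheel (parameter `k`, order `2k+2`)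
with ends `a`, `b` and hubs `u`, `w`; its external spokes are `au` and `bw`. -/
def BiwheelOn {W : Type*} (Γ : SimpleGraph W) (K : Γ.Subgraph) (k : ℕ)
    (a u b w : W) : Prop :=
  ∃ (hk : 2 ≤ k) (φ : biwheelGraph k ≃g K.coe),
    (φ (Sum.inl (⟨0, by omega⟩ : Fin (2 * k)))).val = a ∧
    (φ (Sum.inl (⟨2 * k - 1, by omega⟩ : Fin (2 * k)))).val = b ∧
    (φ (Sum.inr 0)).val = u ∧
    (φ (Sum.inr 1)).val = w

/-- Truncated biwheel: a spanning partial biwheel plus the edges `aw`, `bu`. -/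
def IsTruncatedBiwheel {V : Type*} (G : SimpleGraph V) : Prop :=
  ∃ (K : G.Subgraph) (k : ℕ) (a u b w : V),
    BiwheelOn G K k a u b w ∧ K.verts = Set.univ ∧
    G.edgeSet = K.edgeSet ∪ {s(a, w), s(b, u)}

/-- Prism: a spanning odd ladder plus the edges `aw`, `bu`. -/
def IsPrism {V : Type*} (G : SimpleGraph V) : Prop :=
  ∃ (K : G.Subgraph) (m : ℕ) (a u b w : V),
    Odd m ∧ LadderOn G K m a u b w ∧ K.verts = Set.univ ∧
    G.edgeSet = K.edgeSet ∪ {s(a, w), s(b, u)}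

/-- Möbius ladder: a spanning even ladder plus the edges `aw`, `bu`;
by convention `K₄` is also a Möbius ladder. -/
def IsMobiusLadder {V : Type*} (G : SimpleGraph V) : Prop :=
  (∃ (K : G.Subgraph) (m : ℕ) (a u b w : V),
    Even m ∧ LadderOn G K m a u b w ∧ K.verts = Set.univ ∧
    G.edgeSet = K.edgeSet ∪ {s(a, w), s(b, u)}) ∨
  Nonempty (G ≃g (⊤ : SimpleGraph (Fin 4)))

/-- Staircase: a ladder plus two new vertices `a₂`, `b₂` and the five edges
`a a₂`, `u a₂`, `b b₂`, `w b₂`, `a₂ b₂`. -/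
def IsStaircase {V : Type*} (G : SimpleGraph V) : Prop :=
  ∃ (K : G.Subgraph) (m : ℕ) (a u b w a2 b2 : V),
    LadderOn G K m a u b w ∧
    a2 ∉ K.verts ∧ b2 ∉ K.verts ∧ a2 ≠ b2 ∧
    K.verts ∪ {a2, b2} = Set.univ ∧
    G.edgeSet = K.edgeSet ∪ {s(a, a2), s(u, a2), s(b, b2), s(w, b2), s(a2, b2)}

/-- Pseudo-biwheel: a partial biwheel of order at least eight plus two new
vertices `a₂`, `b₂` and the five edges `a a₂`, `u a₂`, `b b₂`, `w b₂`,
`a₂ b₂`. -/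
def IsPseudoBiwheel {V : Type*} (G : SimpleGraph V) : Prop :=
  ∃ (K : G.Subgraph) (k : ℕ) (a u b w a2 b2 : V),
    3 ≤ k ∧ BiwheelOn G K k a u b w ∧
    a2 ∉ K.verts ∧ b2 ∉ K.verts ∧ a2 ≠ b2 ∧
    K.verts ∪ {a2, b2} = Set.univ ∧
    G.edgeSet = K.edgeSet ∪ {s(a, a2), s(u, a2), s(b, b2), s(w, b2), s(a2, b2)}

/-- Double biwheel of type I: two partial biwheels sharing precisely their
hubs `u`, `w`, plus the edges `a₁a₂` and `b₁b₂`. -/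
def IsDoubleBiwheelI {V : Type*} (G : SimpleGraph V) : Prop :=
  ∃ (K1 K2 : G.Subgraph) (k1 k2 : ℕ) (a1 b1 a2 b2 u w : V),
    BiwheelOn G K1 k1 a1 u b1 w ∧ BiwheelOn G K2 k2 a2 u b2 w ∧
    K1.verts ∩ K2.verts = {u, w} ∧ K1.verts ∪ K2.verts = Set.univ ∧
    G.edgeSet = K1.edgeSet ∪ K2.edgeSet ∪ {s(a1, a2), s(b1, b2)}

/-- Double ladder of type I. -/
def IsDoubleLadderI {V : Type*} (G : SimpleGraph V) : Prop :=
  ∃ (K1 K2 : G.Subgraph) (m1 m2 : ℕ) (a1 b1 a2 b2 u w : V),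
    LadderOn G K1 m1 a1 u b1 w ∧ LadderOn G K2 m2 a2 u b2 w ∧
    K1.verts ∩ K2.verts = {u, w} ∧ K1.verts ∪ K2.verts = Set.univ ∧
    G.edgeSet = K1.edgeSet ∪ K2.edgeSet ∪ {s(a1, a2), s(b1, b2)}

/-- Laddered biwheel of type I. -/
def IsLadderedBiwheelI {V : Type*} (G : SimpleGraph V) : Prop :=
  ∃ (K1 K2 : G.Subgraph) (k1 m2 : ℕ) (a1 b1 a2 b2 u w : V),
    BiwheelOn G K1 k1 a1 u b1 w ∧ LadderOn G K2 m2 a2 u b2 w ∧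
    K1.verts ∩ K2.verts = {u, w} ∧ K1.verts ∪ K2.verts = Set.univ ∧
    G.edgeSet = K1.edgeSet ∪ K2.edgeSet ∪ {s(a1, a2), s(b1, b2)}

/-- Double biwheel of type II: two vertex-disjoint partial biwheels of order
at least eight plus the four edges `a₁a₂`, `b₁b₂`, `u₁w₂`, `w₁u₂`. -/
def IsDoubleBiwheelII {V : Type*} (G : SimpleGraph V) : Prop :=
  ∃ (K1 K2 : G.Subgraph) (k1 k2 : ℕ) (a1 u1 b1 w1 a2 u2 b2 w2 : V),
    3 ≤ k1 ∧ 3 ≤ k2 ∧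
    BiwheelOn G K1 k1 a1 u1 b1 w1 ∧ BiwheelOn G K2 k2 a2 u2 b2 w2 ∧
    K1.verts ∩ K2.verts = ∅ ∧ K1.verts ∪ K2.verts = Set.univ ∧
    G.edgeSet = K1.edgeSet ∪ K2.edgeSet ∪
      {s(a1, a2), s(b1, b2), s(u1, w2), s(w1, u2)}

/-- Double ladder of type II. -/
def IsDoubleLadderII {V : Type*} (G : SimpleGraph V) : Prop :=
  ∃ (K1 K2 : G.Subgraph) (m1 m2 : ℕ) (a1 u1 b1 w1 a2 u2 b2 w2 : V),
    LadderOn G K1 m1 a1 u1 b1 w1 ∧ LadderOn G K2 m2 a2 u2 b2 w2 ∧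
    K1.verts ∩ K2.verts = ∅ ∧ K1.verts ∪ K2.verts = Set.univ ∧
    G.edgeSet = K1.edgeSet ∪ K2.edgeSet ∪
      {s(a1, a2), s(b1, b2), s(u1, w2), s(w1, u2)}

/-- Laddered biwheel of type II. -/
def IsLadderedBiwheelII {V : Type*} (G : SimpleGraph V) : Prop :=
  ∃ (K1 K2 : G.Subgraph) (k1 m2 : ℕ) (a1 u1 b1 w1 a2 u2 b2 w2 : V),
    3 ≤ k1 ∧
    BiwheelOn G K1 k1 a1 u1 b1 w1 ∧ LadderOn G K2 m2 a2 u2 b2 w2 ∧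
    K1.verts ∩ K2.verts = ∅ ∧ K1.verts ∪ K2.verts = Set.univ ∧
    G.edgeSet = K1.edgeSet ∪ K2.edgeSet ∪
      {s(a1, a2), s(b1, b2), s(u1, w2), s(w1, u2)}

/-- Membership in one of the eleven infinite families. -/
def InEleven {V : Type*} (G : SimpleGraph V) : Prop :=
  IsTruncatedBiwheel G ∨ IsPrism G ∨ IsMobiusLadder G ∨ IsStaircase G ∨
  IsPseudoBiwheel G ∨ IsDoubleBiwheelI G ∨ IsDoubleLadderI G ∨
  IsLadderedBiwheelI G ∨ IsDoubleBiwheelII G ∨ IsDoubleLadderII G ∨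
  IsLadderedBiwheelII G

/-- An `R`-ladder configuration: a subgraph `K` of `H := G − R` which is a
ladder with external rungs `au` and `bw` (free corners `u`, `w`) such that
every vertex of `K` except possibly `u` and `w` is cubic in `G`, the corners
`a` and `b` lie in `V(R)`, and every internal rung is an `R`-thin edge of `G`
whose index is two. -/
def RLadderConfig {V : Type*} (G : SimpleGraph V) (α β : Sym2 V)
    (K : (G.deleteEdges {α, β}).Subgraph) (a u b w : V) : Prop :=
  ∃ (m : ℕ) (hm : 3 ≤ m) (φ : ladderGraph m ≃g K.coe),
    (φ ((0 : Fin 2), (⟨0, by omega⟩ : Fin m))).val = a ∧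
    (φ ((1 : Fin 2), (⟨0, by omega⟩ : Fin m))).val = u ∧
    (if m % 2 = 1 then
        (φ ((0 : Fin 2), (⟨m - 1, by omega⟩ : Fin m))).val = w ∧
        (φ ((1 : Fin 2), (⟨m - 1, by omega⟩ : Fin m))).val = b
      else
        (φ ((1 : Fin 2), (⟨m - 1, by omega⟩ : Fin m))).val = w ∧
        (φ ((0 : Fin 2), (⟨m - 1, by omega⟩ : Fin m))).val = b) ∧
    (∀ v ∈ K.verts, v ≠ u → v ≠ w → degOf G v = 3) ∧
    a ∈ VR α β ∧ b ∈ VR α β ∧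
    (∀ i : Fin m, 0 < i.val → i.val < m - 1 →
      RThin G α β s((φ ((0 : Fin 2), i)).val, (φ ((1 : Fin 2), i)).val) ∧
      barrierIndex
        (G.deleteEdges {s((φ ((0 : Fin 2), i)).val, (φ ((1 : Fin 2), i)).val)}) = 2)

/-- An `R`-biwheel configuration: a subgraph `K` of `H := G − R` which is a
partial biwheel with external spokes `au` and `bw` (hubs `u`, `w`) such that
the hubs are not cubic in `G`, every other vertex of `K` is cubic in `G`, the
ends `a` and `b` lie in `V(R)`, and every internal spoke is an `R`-thin edge
of `G` whose index is one. -/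
def RBiwheelConfig {V : Type*} (G : SimpleGraph V) (α β : Sym2 V)
    (K : (G.deleteEdges {α, β}).Subgraph) (a u b w : V) : Prop :=
  ∃ (k : ℕ) (hk : 2 ≤ k) (φ : biwheelGraph k ≃g K.coe),
    (φ (Sum.inl (⟨0, by omega⟩ : Fin (2 * k)))).val = a ∧
    (φ (Sum.inl (⟨2 * k - 1, by omega⟩ : Fin (2 * k)))).val = b ∧
    (φ (Sum.inr 0)).val = u ∧
    (φ (Sum.inr 1)).val = w ∧
    degOf G u ≠ 3 ∧ degOf G w ≠ 3 ∧
    (∀ v ∈ K.verts, v ≠ u → v ≠ w → degOf G v = 3) ∧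
    a ∈ VR α β ∧ b ∈ VR α β ∧
    (∀ e ∈ K.edgeSet, (u ∈ e ∨ w ∈ e) → e ≠ s(a, u) → e ≠ s(b, w) →
      RThin G α β e ∧ barrierIndex (G.deleteEdges {e}) = 1)

/-- An `R`-configuration: an `R`-ladder or an `R`-biwheel, with free corners
`u` and `w`. -/
def RConfig {V : Type*} (G : SimpleGraph V) (α β : Sym2 V)
    (K : (G.deleteEdges {α, β}).Subgraph) (a u b w : V) : Prop :=
  RLadderConfig G α β K a u b w ∨ RBiwheelConfig G α β K a u b w

/-- A 4-cycle on the four (distinct) vertices `v0 v1 v2 v3`. -/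
def Is4Cycle {V : Type*} (H : SimpleGraph V) (v0 v1 v2 v3 : V) : Prop :=
  v0 ≠ v1 ∧ v0 ≠ v2 ∧ v0 ≠ v3 ∧ v1 ≠ v2 ∧ v1 ≠ v3 ∧ v2 ≠ v3 ∧
  H.Adj v0 v1 ∧ H.Adj v1 v2 ∧ H.Adj v2 v3 ∧ H.Adj v3 v0

/-- The cut `∂(X)`. -/
def edgeCutOf {V : Type*} (G : SimpleGraph V) (X : Set V) : Set (Sym2 V) :=
  {e | e ∈ G.edgeSet ∧ ∃ p q : V, e = s(p, q) ∧ p ∈ X ∧ q ∉ X}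

/-- The cut `∂(X)` is tight: every perfect matching contains exactly one of
its edges. -/
def TightCut {V : Type*} (G : SimpleGraph V) (X : Set V) : Prop :=
  ∀ M : G.Subgraph, M.IsPerfectMatching → (M.edgeSet ∩ edgeCutOf G X).ncard = 1

/-- A brace: a bipartite matching covered graph with no nontrivial tight cut. -/
def IsBrace {V : Type*} (G : SimpleGraph V) : Prop :=
  BipartiteGraph G ∧ MatchingCovered G ∧
    ¬ ∃ X : Set V, 2 ≤ X.ncard ∧ 2 ≤ Xᶜ.ncard ∧ TightCut G X

section Stmt7Aux

open SimpleGraph Set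

variable {V : Type*}

/-- Neighbourhood of a set of vertices. -/
def NS (H : SimpleGraph V) (S : Set V) : Set V := {v | ∃ s ∈ S, H.Adj s v}

lemma mem_NS {H : SimpleGraph V} {S : Set V} {v : V} :
    v ∈ NS H S ↔ ∃ s ∈ S, H.Adj s v := Iff.rfl

noncomputable def pmP {H : SimpleGraph V} {M : H.Subgraph}
    (hM : M.IsPerfectMatching) (v : V) : V :=
  (hM.1 (hM.2 v)).choose

lemma pmP_adj {H : SimpleGraph V} {M : H.Subgraph} (hM : M.IsPerfectMatching) (v : V) :
    M.Adj v (pmP hM v) := (hM.1 (hM.2 v)).choose_spec.1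

lemma pmP_eq {H : SimpleGraph V} {M : H.Subgraph} (hM : M.IsPerfectMatching) {v w : V}
    (h : M.Adj v w) : w = pmP hM v := (hM.1 (hM.2 v)).choose_spec.2 w h

lemma pmP_invol {H : SimpleGraph V} {M : H.Subgraph} (hM : M.IsPerfectMatching) (v : V) :
    pmP hM (pmP hM v) = v := (pmP_eq hM ((pmP_adj hM v).symm)).symm

lemma pmP_inj {H : SimpleGraph V} {M : H.Subgraph} (hM : M.IsPerfectMatching) :
    Function.Injective (pmP hM) :=
  Function.Involutive.injective (pmP_invol hM)

lemma edge_rep {H : SimpleGraph V} : ∀ {e : Sym2 V}, e ∈ H.edgeSet →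
    ∃ p q, e = s(p, q) ∧ H.Adj p q := by
  intro e
  induction e using Sym2.ind with
  | _ x y => exact fun he => ⟨x, y, rfl, he⟩

lemma edge_rep_at {H : SimpleGraph V} {e : Sym2 V} {b : V} (he : e ∈ H.edgeSet)
    (hb : b ∈ e) : ∃ a, e = s(a, b) ∧ H.Adj a b := by
  obtain ⟨x, y, rfl, hxy⟩ := edge_rep he
  rcases Sym2.mem_iff.mp hb with rfl | rfl
  · exact ⟨y, Sym2.eq_swap, hxy.symm⟩
  · exact ⟨x, rfl, hxy⟩

lemma BipartitionOf.mem_or {H : SimpleGraph V} {A B : Set V}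
    (hP : BipartitionOf H A B) (v : V) : v ∈ A ∨ v ∈ B := by
  have := hP.1
  have hv : v ∈ A ∪ B := by rw [this]; trivial
  exact hv

lemma BipartitionOf.notB {H : SimpleGraph V} {A B : Set V}
    (hP : BipartitionOf H A B) {v : V} (hv : v ∈ A) : v ∉ B :=
  fun hB => Set.disjoint_left.mp hP.2.1 hv hB

lemma BipartitionOf.notA {H : SimpleGraph V} {A B : Set V}
    (hP : BipartitionOf H A B) {v : V} (hv : v ∈ B) : v ∉ A :=
  fun hA => Set.disjoint_left.mp hP.2.1 hA hv

lemma BipartitionOf.crossAB {H : SimpleGraph V} {A B : Set V}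
    (hP : BipartitionOf H A B) {u v : V} (h : H.Adj u v) (hu : u ∈ A) : v ∈ B :=
  (hP.2.2 h).mp hu

lemma BipartitionOf.crossBA {H : SimpleGraph V} {A B : Set V}
    (hP : BipartitionOf H A B) {u v : V} (h : H.Adj u v) (hu : u ∈ B) : v ∈ A := by
  rcases hP.mem_or v with hv | hv
  · exact hv
  · exact absurd hu (hP.notB ((hP.2.2 h).mpr hv))

protected lemma BipartitionOf.symm {H : SimpleGraph V} {A B : Set V}
    (hP : BipartitionOf H A B) : BipartitionOf H B A := by
  refine ⟨by rw [Set.union_comm]; exact hP.1, hP.2.1.symm, fun u v h => ?_⟩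
  constructor
  · exact fun hu => hP.crossBA h hu
  · intro hv
    rcases hP.mem_or u with hu | hu
    · exact absurd (hP.crossAB h hu) (hP.notB hv)
    · exact hu

lemma exists_pm [Fintype V] {H : SimpleGraph V} (hMC : MatchingCovered H) :
    ∃ M : H.Subgraph, M.IsPerfectMatching := by
  obtain ⟨hcard, hconn, hmc⟩ := hMC
  have h1 : 1 < Fintype.card V := by
    have := Nat.card_eq_fintype_card (α := V); omega
  obtain ⟨u, v, huv⟩ := Fintype.exists_pair_of_one_lt_card h1
  obtain ⟨p⟩ := hconn.preconnected u v
  have hedge : ∀ {u' v' : V}, H.Walk u' v' → u' ≠ v' → ∃ x y, H.Adj x y := by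
    intro u' v' p
    induction p with
    | nil => exact fun h => absurd rfl h
    | cons h _ _ => exact fun _ => ⟨_, _, h⟩
  obtain ⟨x, y, hxy⟩ := hedge p huv
  obtain ⟨M, hM, -⟩ := hmc s(x, y) hxy
  exact ⟨M, hM⟩

lemma card_eq [Fintype V] {H : SimpleGraph V} {A B : Set V}
    (hP : BipartitionOf H A B) {M : H.Subgraph} (hM : M.IsPerfectMatching) :
    A.ncard = B.ncard := by
  have h1 : A.ncard ≤ B.ncard :=
    Set.ncard_le_ncard_of_injOn (pmP hM)
      (fun a ha => hP.crossAB (M.adj_sub (pmP_adj hM a)) ha)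
      ((pmP_inj hM).injOn) (Set.toFinite _)
  have h2 : B.ncard ≤ A.ncard :=
    Set.ncard_le_ncard_of_injOn (pmP hM)
      (fun a ha => hP.crossBA (M.adj_sub (pmP_adj hM a)) ha)
      ((pmP_inj hM).injOn) (Set.toFinite _)
  omega

lemma walk_closed {H : SimpleGraph V} {C : Set V}
    (hcl : ∀ u v, H.Adj u v → u ∈ C → v ∈ C) :
    ∀ {u v : V} (_ : H.Walk u v), u ∈ C → v ∈ C := by
  intro u v p
  induction p with
  | nil => exact id
  | cons h _ ih => exact fun hu => ih (hcl _ _ h hu)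

lemma surplus [Fintype V] {H : SimpleGraph V} {A B S : Set V}
    (hP : BipartitionOf H A B) (hMC : MatchingCovered H) (hSA : S ⊆ A)
    (hne : S.Nonempty) (hz : ∃ z ∈ A, z ∉ S) : S.ncard + 1 ≤ (NS H S).ncard := by
  obtain ⟨M₀, hM₀⟩ := exists_pm hMC
  have hmaps : ∀ (M : H.Subgraph) (hM : M.IsPerfectMatching),
      ∀ a ∈ S, pmP hM a ∈ NS H S :=
    fun M hM a ha => ⟨a, ha, M.adj_sub (pmP_adj hM a)⟩
  have hge : S.ncard ≤ (NS H S).ncard :=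
    Set.ncard_le_ncard_of_injOn _ (hmaps M₀ hM₀) ((pmP_inj hM₀).injOn) (Set.toFinite _)
  rcases lt_or_eq_of_le hge with h | h
  · omega
  exfalso
  have hsurj : ∀ (M : H.Subgraph) (hM : M.IsPerfectMatching),
      ∀ w ∈ NS H S, pmP hM w ∈ S := by
    intro M hM w hw
    have himg : pmP hM '' S = NS H S := by
      apply Set.eq_of_subset_of_ncard_le
      · rintro _ ⟨a, ha, rfl⟩; exact hmaps M hM a ha
      · rw [Set.ncard_image_of_injOn ((pmP_inj hM).injOn)]; omega
      · exact Set.toFinite _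
    rw [← himg] at hw
    obtain ⟨a, ha, haw⟩ := hw
    rw [← haw, pmP_invol]
    exact ha
  by_cases hcl : ∃ w ∈ NS H S, ∃ z, H.Adj w z ∧ z ∉ S
  · obtain ⟨w, hw, z, hwz, hz'⟩ := hcl
    obtain ⟨M, hM, hmem⟩ := hMC.2.2 s(w, z) hwz
    have hMadj : M.Adj w z := SimpleGraph.Subgraph.mem_edgeSet.mp hmem
    exact hz' ((pmP_eq hM hMadj) ▸ hsurj M hM w hw)
  · push_neg at hcl
    obtain ⟨z₀, hz₀A, hz₀S⟩ := hz
    obtain ⟨s₀, hs₀⟩ := hne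
    have hclosed : ∀ u v, H.Adj u v → u ∈ S ∪ NS H S → v ∈ S ∪ NS H S := by
      rintro u v huv (hu | hu)
      · exact Or.inr ⟨u, hu, huv⟩
      · exact Or.inl (hcl u hu v huv)
    obtain ⟨p⟩ := hMC.2.1.preconnected s₀ z₀
    have hz₀C : z₀ ∈ S ∪ NS H S := walk_closed hclosed p (Or.inl hs₀)
    rcases hz₀C with h' | h'
    · exact hz₀S h'
    · obtain ⟨s, hs, hsz⟩ := h'
      exact hP.notB hz₀A (hP.crossAB hsz (hSA hs))

lemma transferPM {H : SimpleGraph V} {s : Set (Sym2 V)} {M : H.Subgraph}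
    (hM : M.IsPerfectMatching) (hdisj : ∀ e ∈ s, e ∉ M.edgeSet) :
    ∃ M' : (H.deleteEdges s).Subgraph, M'.IsPerfectMatching ∧ ∀ u v, (M'.Adj u v ↔ M.Adj u v) := by
  refine ⟨⟨Set.univ, M.Adj, ?_, fun _ => Set.mem_univ _, M.symm⟩,
    ⟨fun v _ => hM.1 (hM.2 v), fun v => Set.mem_univ _⟩, fun u v => Iff.rfl⟩
  intro v w h
  simp only [SimpleGraph.deleteEdges_adj]
  exact ⟨M.adj_sub h, fun hin => hdisj _ hin (SimpleGraph.Subgraph.mem_edgeSet.mpr h)⟩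

lemma pm_through_edge {G : SimpleGraph V} (hbc : BicriticalGraph G) {u v : V}
    (huv : G.Adj u v) : ∃ M : G.Subgraph, M.IsPerfectMatching ∧ M.Adj u v := by
  obtain ⟨N, hN⟩ := hbc.2 u v huv.ne
  have hmemD : ∀ {x : V}, x ≠ u → x ≠ v → x ∈ (({u, v} : Set V)ᶜ) := by
    intro x hxu hxv
    simp [hxu, hxv]
  refine ⟨⟨Set.univ, fun x y => (x = u ∧ y = v) ∨ (x = v ∧ y = u) ∨
      ∃ (hx : x ∈ (({u, v} : Set V)ᶜ)) (hy : y ∈ (({u, v} : Set V)ᶜ)),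
        N.Adj ⟨x, hx⟩ ⟨y, hy⟩, ?_, fun _ => Set.mem_univ _, ?_⟩,
    ⟨?_, fun _ => Set.mem_univ _⟩, Or.inl ⟨rfl, rfl⟩⟩
  · rintro x y (⟨rfl, rfl⟩ | ⟨rfl, rfl⟩ | ⟨hx, hy, h⟩)
    · exact huv
    · exact huv.symm
    · exact N.adj_sub h
  · constructor
    rintro x y (⟨rfl, rfl⟩ | ⟨rfl, rfl⟩ | ⟨hx, hy, h⟩)
    · exact Or.inr (Or.inl ⟨rfl, rfl⟩)
    · exact Or.inl ⟨rfl, rfl⟩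
    · exact Or.inr (Or.inr ⟨hy, hx, N.adj_symm h⟩)
  · intro x _
    by_cases hxu : x = u
    · subst hxu
      refine ⟨v, Or.inl ⟨rfl, rfl⟩, ?_⟩
      rintro y (⟨-, rfl⟩ | ⟨h1, rfl⟩ | ⟨hx, -, -⟩)
      · rfl
      · exact absurd h1 huv.ne
      · simp at hx
    by_cases hxv : x = v
    · subst hxv
      refine ⟨u, Or.inr (Or.inl ⟨rfl, rfl⟩), ?_⟩
      rintro y (⟨h1, rfl⟩ | ⟨-, rfl⟩ | ⟨hx, -, -⟩)
      · exact absurd h1 hxu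
      · rfl
      · simp at hx
    · have hx : x ∈ (({u, v} : Set V)ᶜ) := hmemD hxu hxv
      refine ⟨(pmP hN ⟨x, hx⟩ : ↥(({u, v} : Set V)ᶜ)), Or.inr (Or.inr
        ⟨hx, (pmP hN ⟨x, hx⟩).2, pmP_adj hN ⟨x, hx⟩⟩), ?_⟩
      rintro y (⟨h1, -⟩ | ⟨h1, -⟩ | ⟨hx', hy, h⟩)
      · exact absurd h1 hxu
      · exact absurd h1 hxv
      · have := pmP_eq hN h
        exact congrArg Subtype.val this

lemma no_same_side [Fintype V] {G : SimpleGraph V} {A B : Set V} (hd : Disjoint A B)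
    (hU : A ∪ B = Set.univ) (hcard : A.ncard ≤ B.ncard) {M : G.Subgraph}
    (hM : M.IsPerfectMatching) {p q : V} (hpq : M.Adj p q) (hp : p ∈ A) (hq : q ∈ A)
    (hno : ∀ r t, M.Adj r t → r ∈ B → t ∉ B) : False := by
  have hpB : p ∉ B := Set.disjoint_left.mp hd hp
  have hmap : ∀ w ∈ insert p B, pmP hM w ∈ A := by
    intro w hw
    rcases Set.mem_insert_iff.mp hw with rfl | hwB
    · rw [← pmP_eq hM hpq]; exact hq
    · have := hno w (pmP hM w) (pmP_adj hM w) hwB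
      have hor : pmP hM w ∈ A ∪ B := by rw [hU]; trivial
      rcases hor with h | h
      · exact h
      · exact absurd h this
  have h1 : (insert p B).ncard ≤ A.ncard :=
    Set.ncard_le_ncard_of_injOn _ hmap ((pmP_inj hM).injOn) (Set.toFinite _)
  rw [Set.ncard_insert_of_notMem hpB (Set.toFinite _)] at h1
  omega

lemma bip_not_bicritical [Fintype V] {G : SimpleGraph V} {A B : Set V}
    (hd : Disjoint A B) (hU : A ∪ B = Set.univ) (hAB : A.ncard = B.ncard)
    (h2 : 2 ≤ A.ncard) (hcross : ∀ u w, G.Adj u w → (u ∈ A ↔ w ∈ B))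
    (hbc : BicriticalGraph G) : False := by
  classical
  have h1A : 1 < A.ncard := by omega
  obtain ⟨u₁, u₂, hu₁, hu₂, hne⟩ := (Set.one_lt_ncard_iff (Set.toFinite A)).mp h1A
  obtain ⟨N, hN⟩ := hbc.2 u₁ u₂ hne
  have hBD : ∀ w ∈ B, w ∈ (({u₁, u₂} : Set V)ᶜ) := by
    intro w hw
    rw [Set.mem_compl_iff]
    rintro (rfl | hmem)
    · exact Set.disjoint_left.mp hd hu₁ hw
    · rw [Set.mem_singleton_iff] at hmem
      subst hmem
      exact Set.disjoint_left.mp hd hu₂ hw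
  set f : V → V := fun w =>
    if hw : w ∈ (({u₁, u₂} : Set V)ᶜ) then (pmP hN ⟨w, hw⟩).1 else w with hf
  have hfmem : ∀ {w : V} (hw : w ∈ (({u₁, u₂} : Set V)ᶜ)),
      f w = (pmP hN ⟨w, hw⟩).1 := by
    intro w hw; simp only [hf, dif_pos hw]
  have hmap : ∀ w ∈ B, f w ∈ A \ {u₁, u₂} := by
    intro w hw
    have hwD := hBD w hw
    rw [hfmem hwD]
    have hadj : G.Adj w (pmP hN ⟨w, hwD⟩).1 := N.adj_sub (pmP_adj hN ⟨w, hwD⟩)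
    have hwA : w ∉ A := Set.disjoint_right.mp hd hw
    have hnB : (pmP hN ⟨w, hwD⟩).1 ∉ B := fun hB => hwA ((hcross _ _ hadj).mpr hB)
    have hA' : (pmP hN ⟨w, hwD⟩).1 ∈ A := by
      have hor : (pmP hN ⟨w, hwD⟩).1 ∈ A ∪ B := by rw [hU]; trivial
      rcases hor with h | h
      · exact h
      · exact absurd h hnB
    exact ⟨hA', (pmP hN ⟨w, hwD⟩).2⟩
  have hinj : Set.InjOn f B := by
    intro w hw w' hw' hww
    rw [hfmem (hBD w hw), hfmem (hBD w' hw')] at hww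
    have := pmP_inj hN (Subtype.coe_injective hww)
    exact congrArg Subtype.val this
  have h1 : B.ncard ≤ (A \ {u₁, u₂}).ncard :=
    Set.ncard_le_ncard_of_injOn f hmap hinj (Set.toFinite _)
  have hsub : ({u₁, u₂} : Set V) ⊆ A := by
    rintro z (rfl | hz)
    · exact hu₁
    · rw [Set.mem_singleton_iff] at hz; subst hz; exact hu₂
  rw [Set.ncard_diff hsub (Set.toFinite _), Set.ncard_pair hne] at h1
  omega

lemma sides_half [Fintype V] {G : SimpleGraph V} {γ δ : Sym2 V} {A B : Set V}
    (hP : BipartitionOf (G.deleteEdges {γ, δ}) A B)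
    (hbc : BicriticalGraph G) (hAB : A.ncard ≤ B.ncard)
    {p q : V} (hγ : γ = s(p, q)) (hγE : γ ∈ G.edgeSet)
    (hp : p ∈ A) (hq : q ∈ A) : ∀ v ∈ δ, v ∈ B := by
  classical
  have hGpq : G.Adj p q := by rw [hγ] at hγE; exact hγE
  obtain ⟨M, hM, hMpq⟩ := pm_through_edge hbc hGpq
  have hBB : ∃ r t, M.Adj r t ∧ r ∈ B ∧ t ∈ B := by
    by_contra hno
    push_neg at hno
    exact no_same_side hP.2.1 hP.1 hAB hM hMpq hp hq hno
  obtain ⟨r, t, hrt, hrB, htB⟩ := hBB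
  have hGrt : G.Adj r t := M.adj_sub hrt
  by_cases h1 : s(r, t) = γ
  · exfalso
    have hpmem : p = r ∨ p = t := by
      have hm : p ∈ s(r, t) := by rw [h1, hγ]; exact Sym2.mem_mk_left p q
      exact Sym2.mem_iff.mp hm
    rcases hpmem with rfl | rfl
    · exact hP.notB hp hrB
    · exact hP.notB hp htB
  by_cases h2 : s(r, t) = δ
  · intro v hv
    rw [← h2] at hv
    rcases Sym2.mem_iff.mp hv with rfl | rfl
    · exact hrB
    · exact htB
  · exfalso
    have hH : (G.deleteEdges {γ, δ}).Adj r t := by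
      rw [SimpleGraph.deleteEdges_adj]
      exact ⟨hGrt, by simp [h1, h2]⟩
    exact hP.notB (hP.crossBA hH hrB) htB

lemma sides [Fintype V] {G : SimpleGraph V} {α β : Sym2 V} {A B : Set V}
    (hP : BipartitionOf (G.deleteEdges {α, β}) A B)
    (hbc : BicriticalGraph G) (h4 : 4 ≤ Nat.card V) (hR : RemovableDoubleton G α β) :
    ∃ p q : V, p ∈ A ∧ q ∈ A ∧
      ((α = s(p, q) ∧ ∀ v ∈ β, v ∈ B) ∨ (β = s(p, q) ∧ ∀ v ∈ α, v ∈ B)) := by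
  classical
  have hMC := hR.2.2.2.2
  obtain ⟨M₀, hM₀⟩ := exists_pm hMC
  have hcard := card_eq hP hM₀
  have hpair : ({β, α} : Set (Sym2 V)) = {α, β} := Set.pair_comm β α
  have hP2 : BipartitionOf (G.deleteEdges {β, α}) A B := by rw [hpair]; exact hP
  obtain ⟨p, q, hαrep, hGpq⟩ := edge_rep hR.2.1
  have hmixed : ∀ p' q' : V, α = s(p', q') → p' ∈ A → q' ∈ B → False := by
    intro p' q' hα hp hq
    obtain ⟨r, t, hβrep, hGrt⟩ := edge_rep hR.2.2.1
    have h2A : 2 ≤ A.ncard := by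
      have hsum : A.ncard + B.ncard = Nat.card V := by
        rw [← Set.ncard_union_eq hP.2.1 (Set.toFinite _) (Set.toFinite _), hP.1,
          Set.ncard_univ]
      omega
    have crossproof : (r ∈ A ∧ t ∈ B) ∨ (r ∈ B ∧ t ∈ A) → False := by
      intro hrt
      apply bip_not_bicritical hP.2.1 hP.1 hcard h2A ?_ hbc
      intro u w huw
      by_cases h1 : s(u, w) = α
      · rw [hα] at h1
        rcases Sym2.eq_iff.mp h1 with ⟨rfl, rfl⟩ | ⟨rfl, rfl⟩
        · exact iff_of_true hp hq
        · exact iff_of_false (hP.notA hq) (hP.notB hp)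
      · by_cases h2 : s(u, w) = β
        · rw [hβrep] at h2
          rcases Sym2.eq_iff.mp h2 with ⟨rfl, rfl⟩ | ⟨rfl, rfl⟩
          · rcases hrt with ⟨h3, h4'⟩ | ⟨h3, h4'⟩
            · exact iff_of_true h3 h4'
            · exact iff_of_false (hP.notA h3) (hP.notB h4')
          · rcases hrt with ⟨h3, h4'⟩ | ⟨h3, h4'⟩
            · exact iff_of_false (hP.notA h4') (hP.notB h3)
            · exact iff_of_true h4' h3
        · have hH : (G.deleteEdges {α, β}).Adj u w := by
            rw [SimpleGraph.deleteEdges_adj]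
            exact ⟨huw, by simp [h1, h2]⟩
          exact hP.2.2 hH
    rcases hP.mem_or r with hr | hr <;> rcases hP.mem_or t with ht | ht
    · have hres := sides_half hP2 hbc (le_of_eq hcard) hβrep hR.2.2.1 hr ht
      exact hP.notB hp (hres p' (by rw [hα]; exact Sym2.mem_mk_left p' q'))
    · exact crossproof (Or.inl ⟨hr, ht⟩)
    · exact crossproof (Or.inr ⟨hr, ht⟩)
    · have hres := sides_half hP2.symm hbc (le_of_eq hcard.symm) hβrep hR.2.2.1 hr ht
      exact hP.notA hq (hres q' (by rw [hα]; exact Sym2.mem_mk_right p' q'))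
  rcases hP.mem_or p with hp | hp <;> rcases hP.mem_or q with hq | hq
  · exact ⟨p, q, hp, hq, Or.inl ⟨hαrep,
      sides_half hP hbc (le_of_eq hcard) hαrep hR.2.1 hp hq⟩⟩
  · exact (hmixed p q hαrep hp hq).elim
  · exact (hmixed q p (hαrep.trans Sym2.eq_swap) hq hp).elim
  · have hβA : ∀ v ∈ β, v ∈ A :=
      sides_half hP.symm hbc (le_of_eq hcard.symm) hαrep hR.2.1 hp hq
    obtain ⟨r, t, hβrep, hGrt⟩ := edge_rep hR.2.2.1
    refine ⟨r, t, hβA r (by rw [hβrep]; exact Sym2.mem_mk_left r t),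
      hβA t (by rw [hβrep]; exact Sym2.mem_mk_right r t), Or.inr ⟨hβrep, ?_⟩⟩
    intro v hv
    rw [hαrep] at hv
    rcases Sym2.mem_iff.mp hv with rfl | rfl
    · exact hp
    · exact hq

lemma bad_set [Fintype V] {H : SimpleGraph V} {A B : Set V}
    (hP : BipartitionOf H A B) (hMC : MatchingCovered H) {a b a' : V}
    (hab : H.Adj a b) (ha'b : H.Adj a' b) (hne : a' ≠ a) (hbB : b ∈ B)
    (hnr : ¬ MatchingCovered (H.deleteEdges {s(a, b)})) :
    ∃ S : Set V, S ⊆ A ∧ a ∈ S ∧ (∀ c, H.Adj c b → c ∈ S → c = a) ∧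
      (NS H S).ncard = S.ncard + 1 := by
  classical
  set e : Sym2 V := s(a, b) with he_def
  set H' : SimpleGraph V := H.deleteEdges {e} with hH'_def
  have haA : a ∈ A := hP.crossBA hab.symm hbB
  have ha'A : a' ∈ A := hP.crossBA ha'b.symm hbB
  have heE : e ∈ H.edgeSet := hab
  have hMe : ∃ M : H.Subgraph, M.IsPerfectMatching ∧ M.Adj a b := by
    obtain ⟨M, hM, hmem⟩ := hMC.2.2 e heE
    exact ⟨M, hM, SimpleGraph.Subgraph.mem_edgeSet.mp hmem⟩
  -- the edge s(a',b) is different from e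
  have ha'e : s(a', b) ≠ e := by
    rw [he_def]
    intro h
    rcases Sym2.eq_iff.mp h with ⟨h1, -⟩ | ⟨h1, h2⟩
    · exact hne h1
    · exact hP.notB haA (h2 ▸ hbB)
  have ha'H' : H'.Adj a' b := by
    rw [hH'_def, SimpleGraph.deleteEdges_adj]
    exact ⟨ha'b, by simp [ha'e]⟩
  -- X := reachable set of a in H'
  set X : Set V := {v | H'.Reachable a v} with hX_def
  have haX : a ∈ X := Set.mem_setOf.mpr (SimpleGraph.Reachable.refl a)
  have hXc : ∀ u v, H'.Adj u v → u ∈ X → v ∈ X := by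
    intro u v huv hu
    exact Set.mem_setOf.mpr ((Set.mem_setOf.mp hu).trans huv.reachable)
  have hconn' : H'.Connected := by
    by_cases hbX : b ∈ X
    · have hall : ∀ v, v ∈ X := by
        intro v
        obtain ⟨p⟩ := hMC.2.1.preconnected a v
        have hcl : ∀ u w, H.Adj u w → u ∈ X → w ∈ X := by
          intro u w huw hu
          by_cases h1 : s(u, w) = e
          · rcases Sym2.eq_iff.mp (h1.trans he_def) with ⟨-, rfl⟩ | ⟨-, rfl⟩
            · exact hbX
            · exact haX
          · have hadj' : H'.Adj u w := by
              rw [hH'_def, SimpleGraph.deleteEdges_adj]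
              exact ⟨huw, by simp [h1]⟩
            exact hXc u w hadj' hu
        exact walk_closed hcl p haX
      have hpos : 0 < Nat.card V := by have := hMC.1; omega
      haveI : Nonempty V := (Nat.card_pos_iff.mp hpos).1
      exact SimpleGraph.Connected.mk (fun u v =>
        ((Set.mem_setOf.mp (hall u)).symm).trans (Set.mem_setOf.mp (hall v)))
    · exfalso
      obtain ⟨M, hM, hMab⟩ := hMe
      have hbP : b = pmP hM a := pmP_eq hM hMab
      have hψ : ∀ w ∈ X ∩ B, pmP hM w ∈ (X ∩ A) \ {a} := by
        intro w hw
        have hwX := hw.1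
        have hwB := hw.2
        have hMw : M.Adj w (pmP hM w) := pmP_adj hM w
        have hwe : s(w, pmP hM w) ≠ e := by
          rw [he_def]
          intro h
          rcases Sym2.eq_iff.mp h with ⟨h1, -⟩ | ⟨h1, -⟩
          · exact hP.notA hwB (h1 ▸ haA)
          · exact hbX (h1 ▸ hwX)
        have hH'w : H'.Adj w (pmP hM w) := by
          rw [hH'_def, SimpleGraph.deleteEdges_adj]
          exact ⟨M.adj_sub hMw, by simp [hwe]⟩
        refine ⟨⟨hXc w _ hH'w hwX, hP.crossBA (M.adj_sub hMw) hwB⟩, ?_⟩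
        intro hpa
        rw [Set.mem_singleton_iff] at hpa
        have : w = pmP hM (pmP hM w) := (pmP_invol hM w).symm
        rw [hpa, ← hbP] at this
        exact hbX (this ▸ hwX)
      have hcard1 : (X ∩ B).ncard ≤ ((X ∩ A) \ {a}).ncard :=
        Set.ncard_le_ncard_of_injOn _ hψ ((pmP_inj hM).injOn) (Set.toFinite _)
      have hcard2 : ((X ∩ A) \ {a}).ncard + 1 = (X ∩ A).ncard :=
        Set.ncard_diff_singleton_add_one ⟨haX, haA⟩ (Set.toFinite _)
      have hNsub : NS H (X ∩ A) ⊆ (X ∩ B) ∪ {b} := by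
        rintro v ⟨c, hcS, hcv⟩
        by_cases h1 : s(c, v) = e
        · rcases Sym2.eq_iff.mp (h1.trans he_def) with ⟨-, rfl⟩ | ⟨h2, -⟩
          · exact Or.inr rfl
          · exact absurd (h2 ▸ hbB) (hP.notB hcS.2)
        · have hH'cv : H'.Adj c v := by
            rw [hH'_def, SimpleGraph.deleteEdges_adj]
            exact ⟨hcv, by simp [h1]⟩
          exact Or.inl ⟨hXc c v hH'cv hcS.1, hP.crossAB hcv hcS.2⟩
      have hNcard : (NS H (X ∩ A)).ncard ≤ (X ∩ A).ncard := by
        have h1 : (NS H (X ∩ A)).ncard ≤ (X ∩ B).ncard + 1 := by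
          have := Set.ncard_le_ncard hNsub (Set.toFinite _)
          have h2 := Set.ncard_union_le (X ∩ B) ({b} : Set V)
          simp only [Set.ncard_singleton] at h2
          omega
        omega
      have hSa' : a' ∉ X ∩ A := by
        rintro ⟨ha'X, -⟩
        exact hbX (hXc a' b ha'H' ha'X)
      have hsur := surplus hP hMC (Set.inter_subset_right) ⟨a, haX, haA⟩
        ⟨a', ha'A, hSa'⟩
      omega
  -- main part: find the Hall violator
  have hbad : ∃ f ∈ H'.edgeSet, ∀ M' : H'.Subgraph, M'.IsPerfectMatching →
      f ∉ M'.edgeSet := by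
    by_contra hgood
    push_neg at hgood
    apply hnr
    refine ⟨hMC.1, hconn', ?_⟩
    intro f hf
    obtain ⟨M', hM', hmem⟩ := hgood f hf
    exact ⟨M', hM', hmem⟩
  obtain ⟨f, hfE, hnof⟩ := hbad
  have hfH : f ∈ H.edgeSet ∧ f ≠ e := by
    have := hfE
    rw [hH'_def, SimpleGraph.edgeSet_deleteEdges] at this
    exact ⟨this.1, by simpa using this.2⟩
  obtain ⟨x₀, y₀, hfrep, hfadj⟩ := edge_rep hfH.1
  -- main argument, for the correctly oriented representation
  have main : ∀ x y : V, x ∈ A → y ∈ B → H'.Adj x y →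
      (∀ M' : H'.Subgraph, M'.IsPerfectMatching → s(x, y) ∉ M'.edgeSet) →
      ∃ S : Set V, S ⊆ A ∧ a ∈ S ∧ (∀ c, H.Adj c b → c ∈ S → c = a) ∧
        (NS H S).ncard = S.ncard + 1 := by
    intro x y hxA hyB hxyH' hnoxy
    classical
    have hH'le : ∀ {u v : V}, H'.Adj u v → H.Adj u v ∧ s(u, v) ≠ e := by
      intro u v h
      rw [hH'_def, SimpleGraph.deleteEdges_adj] at h
      exact ⟨h.1, by simpa using h.2⟩
    have hxy := hH'le hxyH'
    -- y ≠ b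
    have hyb : y ≠ b := by
      rintro rfl
      obtain ⟨M, hM, hmem⟩ := hMC.2.2 s(x, y) hxy.1
      have hMxy : M.Adj x y := SimpleGraph.Subgraph.mem_edgeSet.mp hmem
      have heM : ∀ e' ∈ ({e} : Set (Sym2 V)), e' ∉ M.edgeSet := by
        intro e' he' hmem'
        rw [Set.mem_singleton_iff] at he'
        subst he'
        rw [he_def] at hmem'
        have hMab : M.Adj a y := SimpleGraph.Subgraph.mem_edgeSet.mp hmem'
        have h1 : a = pmP hM y := pmP_eq hM hMab.symm
        have h2 : x = pmP hM y := pmP_eq hM hMxy.symm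
        have : s(x, y) = e := by rw [he_def, h2, h1]
        exact hxy.2 this
      obtain ⟨M', hM', hMiff⟩ := transferPM hM heM
      exact hnoxy M' hM' (SimpleGraph.Subgraph.mem_edgeSet.mpr ((hMiff x y).mpr hMxy))
    obtain ⟨Mw, hMw⟩ := exists_pm hMC
    have hABcard : A.ncard = B.ncard := card_eq hP hMw
    -- Hall's condition setup
    set t : ↥(A \ {x} : Set V) → Finset V :=
      fun c => (Set.toFinite {v | H'.Adj c.1 v ∧ v ≠ y}).toFinset with ht_def
    have hmem_t : ∀ (c : ↥(A \ {x} : Set V)) (v : V),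
        v ∈ t c ↔ H'.Adj c.1 v ∧ v ≠ y := by
      intro c v
      rw [ht_def, Set.Finite.mem_toFinset]
      rfl
    by_cases hall : ∀ sF : Finset ↥(A \ {x} : Set V), sF.card ≤ (sF.biUnion t).card
    · exfalso
      obtain ⟨g, ginj, hg⟩ := (Finset.all_card_le_biUnion_card_iff_exists_injective t).mp hall
      have hgspec : ∀ c : ↥(A \ {x} : Set V), H'.Adj c.1 (g c) ∧ g c ≠ y :=
        fun c => (hmem_t c (g c)).mp (hg c)
      have hgB : ∀ c : ↥(A \ {x} : Set V), g c ∈ B :=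
        fun c => hP.crossAB (hH'le (hgspec c).1).1 c.2.1
      set g' : ↥(A \ {x} : Set V) → ↥(B \ {y} : Set V) :=
        fun c => ⟨g c, ⟨hgB c, by simpa using (hgspec c).2⟩⟩ with hg'_def
      have ginj' : Function.Injective g' := by
        intro c c' h
        exact ginj (congrArg Subtype.val h)
      have hcards : Nat.card ↥(A \ {x} : Set V) = Nat.card ↥(B \ {y} : Set V) := by
        rw [Nat.card_coe_set_eq, Nat.card_coe_set_eq,
          Set.ncard_diff_singleton_of_mem hxA,
          Set.ncard_diff_singleton_of_mem hyB, hABcard]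
      have gsurj : Function.Surjective g' :=
        ((Nat.bijective_iff_injective_and_card g').mpr ⟨ginj', hcards⟩).2
      -- build the perfect matching of H' containing s(x,y)
      set MA : V → V → Prop := fun u v =>
        (∃ c : ↥(A \ {x} : Set V), s(u, v) = s(c.1, g c)) ∨ s(u, v) = s(x, y) with hMA_def
      have hMAsymm : ∀ u v, MA u v → MA v u := by
        rintro u v (⟨c, hc⟩ | hc)
        · exact Or.inl ⟨c, Sym2.eq_swap.trans hc⟩
        · exact Or.inr (Sym2.eq_swap.trans hc)
      have hMAsub : ∀ {u v}, MA u v → H'.Adj u v := by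
        rintro u v (⟨c, hc⟩ | hc)
        · rcases Sym2.eq_iff.mp hc with ⟨rfl, rfl⟩ | ⟨rfl, rfl⟩
          · exact (hgspec c).1
          · exact (hgspec c).1.symm
        · rcases Sym2.eq_iff.mp hc with ⟨rfl, rfl⟩ | ⟨rfl, rfl⟩
          · exact hxyH'
          · exact hxyH'.symm
      set Msub : H'.Subgraph :=
        ⟨Set.univ, MA, fun h => hMAsub h, fun _ => Set.mem_univ _,
         ⟨fun u v h => hMAsymm u v h⟩⟩ with hMsub_def
      have hMsubPM : Msub.IsPerfectMatching := by
        refine ⟨?_, fun v => Set.mem_univ _⟩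
        intro z _
        rcases hP.mem_or z with hzA | hzB
        · by_cases hzx : z = x
          · subst hzx
            refine ⟨y, Or.inr rfl, ?_⟩
            rintro w (⟨c, hc⟩ | hc)
            · rcases Sym2.eq_iff.mp hc with ⟨h1, -⟩ | ⟨h1, -⟩
              · exact absurd (Set.mem_singleton_iff.mpr h1.symm) c.2.2
              · exact absurd (h1 ▸ hgB c) (hP.notB hzA)
            · rcases Sym2.eq_iff.mp hc with ⟨-, h2⟩ | ⟨h1, -⟩
              · exact h2
              · exact absurd (h1 ▸ hyB) (hP.notB hzA)
          · refine ⟨g ⟨z, ⟨hzA, by simpa using hzx⟩⟩,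
              Or.inl ⟨⟨z, ⟨hzA, by simpa using hzx⟩⟩, rfl⟩, ?_⟩
            rintro w (⟨c, hc⟩ | hc)
            · rcases Sym2.eq_iff.mp hc with ⟨h1, h2⟩ | ⟨h1, -⟩
              · rw [h2]
                congr 1
                exact Subtype.ext h1.symm
              · exact absurd (h1 ▸ hgB c) (hP.notB hzA)
            · rcases Sym2.eq_iff.mp hc with ⟨h1, -⟩ | ⟨h1, -⟩
              · exact absurd h1 hzx
              · exact absurd (h1 ▸ hyB) (hP.notB hzA)
        · by_cases hzy : z = y
          · subst hzy
            refine ⟨x, Or.inr Sym2.eq_swap, ?_⟩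
            rintro w (⟨c, hc⟩ | hc)
            · rcases Sym2.eq_iff.mp hc with ⟨h1, -⟩ | ⟨h1, -⟩
              · exact absurd (h1 ▸ c.2.1) (hP.notA hzB)
              · exact absurd h1.symm (hgspec c).2
            · rcases Sym2.eq_iff.mp hc with ⟨h1, -⟩ | ⟨-, h2⟩
              · exact absurd (h1 ▸ hxA) (hP.notA hzB)
              · exact h2
          · obtain ⟨c, hc⟩ := gsurj ⟨z, ⟨hzB, by simpa using hzy⟩⟩
            have hgc : g c = z := congrArg Subtype.val hc
            refine ⟨c.1, Or.inl ⟨c, by rw [hgc]; exact Sym2.eq_swap⟩, ?_⟩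
            rintro w (⟨c', hc'⟩ | hc')
            · rcases Sym2.eq_iff.mp hc' with ⟨h1, -⟩ | ⟨h1, h2⟩
              · exact absurd (h1 ▸ c'.2.1) (hP.notA hzB)
              · have : c' = c := ginj (by rw [hgc, ← h1])
                rw [h2, this]
            · rcases Sym2.eq_iff.mp hc' with ⟨h1, -⟩ | ⟨h1, -⟩
              · exact absurd (h1 ▸ hxA) (hP.notA hzB)
              · exact absurd h1 hzy
      exact hnoxy Msub hMsubPM (SimpleGraph.Subgraph.mem_edgeSet.mpr (Or.inr rfl))
    · push_neg at hall
      obtain ⟨sF, hsF⟩ := hall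
      set T : Set V := ↑(sF.image (fun c => c.1)) with hT_def
      have hTcard : T.ncard = sF.card := by
        rw [hT_def, Set.ncard_coe_finset,
          Finset.card_image_of_injective _ Subtype.val_injective]
      have hTmem : ∀ {v : V}, v ∈ T → ∃ c : ↥(A \ {x} : Set V), c ∈ sF ∧ c.1 = v := by
        intro v hv
        rw [hT_def, Finset.coe_image] at hv
        obtain ⟨c, hc, rfl⟩ := hv
        exact ⟨c, hc, rfl⟩
      have hTA : T ⊆ A := by
        intro v hv
        obtain ⟨c, -, rfl⟩ := hTmem hv
        exact c.2.1
      have hTx : x ∉ T := by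
        intro hv
        obtain ⟨c, -, hc⟩ := hTmem hv
        exact c.2.2 (Set.mem_singleton_iff.mpr hc)
      have hNsub : (NS H' T) \ {y} ⊆ ↑(sF.biUnion t) := by
        rintro v ⟨⟨c', hc'T, hadj⟩, hvy⟩
        obtain ⟨c, hcsF, hceq⟩ := hTmem hc'T
        rw [Finset.coe_biUnion]
        refine Set.mem_biUnion hcsF ?_
        rw [Finset.mem_coe, hmem_t]
        exact ⟨by rw [hceq]; exact hadj, by simpa using hvy⟩
      have h01 : ((NS H' T) \ {y}).ncard ≤ (sF.biUnion t).card := by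
        rw [← Set.ncard_coe_finset]
        exact Set.ncard_le_ncard hNsub (Set.toFinite _)
      have hsmall : ((NS H' T) \ {y}).ncard + 1 ≤ T.ncard := by omega
      have hNTsub : NS H T ⊆ ((NS H' T) \ {y}) ∪ {y, b} := by
        rintro v ⟨c, hcT, hadj⟩
        by_cases h1 : s(c, v) = e
        · rcases Sym2.eq_iff.mp (h1.trans he_def) with ⟨-, rfl⟩ | ⟨h2, -⟩
          · exact Or.inr (Or.inr rfl)
          · exact absurd (h2 ▸ hbB) (hP.notB (hTA hcT))
        · have hadj' : H'.Adj c v := by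
            rw [hH'_def, SimpleGraph.deleteEdges_adj]
            exact ⟨hadj, by simp [h1]⟩
          by_cases hvy : v = y
          · exact Or.inr (Or.inl hvy)
          · exact Or.inl ⟨⟨c, hcT, hadj'⟩, by simpa using hvy⟩
      have hup : (NS H T).ncard ≤ T.ncard + 1 := by
        have h2 := Set.ncard_le_ncard hNTsub (Set.toFinite _)
        have h3 := Set.ncard_union_le ((NS H' T) \ {y}) ({y, b} : Set V)
        rw [Set.ncard_pair hyb] at h3
        omega
      have hTne : T.Nonempty := by
        apply Set.nonempty_of_ncard_ne_zero
        omega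
      have hlow := surplus hP hMC hTA hTne ⟨x, hxA, hTx⟩
      have hbNS' : b ∉ NS H' T := by
        intro hbN
        have hsub2 : NS H T ⊆ ((NS H' T) \ {y}) ∪ {y} := by
          intro v hv
          rcases hNTsub hv with h | h
          · exact Or.inl h
          · rcases h with h | h
            · exact Or.inr h
            · rw [Set.mem_singleton_iff] at h
              subst h
              exact Or.inl ⟨hbN, by simpa using (Ne.symm hyb)⟩
        have h2 := Set.ncard_le_ncard hsub2 (Set.toFinite _)
        have h3 := Set.ncard_union_le ((NS H' T) \ {y}) ({y} : Set V)
        rw [Set.ncard_singleton] at h3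
        omega
      have hkey : ∀ c, H.Adj c b → c ∈ T → c = a := by
        intro c hcb hcT
        by_contra hca
        have h1 : s(c, b) ≠ e := by
          rw [he_def]
          intro h
          rcases Sym2.eq_iff.mp h with ⟨h2, -⟩ | ⟨h2, -⟩
          · exact hca h2
          · exact hP.notB (hTA hcT) (h2 ▸ hbB)
        have hadj' : H'.Adj c b := by
          rw [hH'_def, SimpleGraph.deleteEdges_adj]
          exact ⟨hcb, by simp [h1]⟩
        exact hbNS' ⟨c, hcT, hadj'⟩
      have haT : a ∈ T := by
        by_contra haT
        have hsub2 : NS H T ⊆ ((NS H' T) \ {y}) ∪ {y} := by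
          rintro v ⟨c, hcT, hadj⟩
          by_cases h1 : s(c, v) = e
          · rcases Sym2.eq_iff.mp (h1.trans he_def) with ⟨h2, -⟩ | ⟨h2, -⟩
            · exact absurd (h2 ▸ hcT) haT
            · exact absurd (h2 ▸ hbB) (hP.notB (hTA hcT))
          · have hadj' : H'.Adj c v := by
              rw [hH'_def, SimpleGraph.deleteEdges_adj]
              exact ⟨hadj, by simp [h1]⟩
            by_cases hvy : v = y
            · exact Or.inr hvy
            · exact Or.inl ⟨⟨c, hcT, hadj'⟩, by simpa using hvy⟩
        have h2 := Set.ncard_le_ncard hsub2 (Set.toFinite _)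
        have h3 := Set.ncard_union_le ((NS H' T) \ {y}) ({y} : Set V)
        rw [Set.ncard_singleton] at h3
        omega
      exact ⟨T, hTA, haT, hkey, le_antisymm hup hlow⟩
  have hfadj' : H'.Adj x₀ y₀ := by
    have := hfE
    rw [hfrep] at this
    exact this
  rcases hP.mem_or x₀ with hx₀ | hx₀
  · have hy₀ : y₀ ∈ B := hP.crossAB hfadj hx₀
    exact main x₀ y₀ hx₀ hy₀ hfadj' (by rw [← hfrep]; exact hnof)
  · have hy₀ : y₀ ∈ A := hP.crossBA hfadj hx₀
    refine main y₀ x₀ hy₀ hx₀ hfadj'.symm ?_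
    have : s(y₀, x₀) = f := Sym2.eq_swap.trans hfrep.symm
    rw [this]
    exact hnof

lemma disj [Fintype V] {H : SimpleGraph V} {A B : Set V}
    (hP : BipartitionOf H A B) (hMC : MatchingCovered H) {b a₁ a₂ c : V}
    (h1 : H.Adj a₁ b) (h2 : H.Adj a₂ b) (h12 : a₁ ≠ a₂)
    {S₁ S₂ : Set V} (hS₁A : S₁ ⊆ A) (hS₂A : S₂ ⊆ A)
    (hk₁ : ∀ z, H.Adj z b → z ∈ S₁ → z = a₁) (hk₂ : ∀ z, H.Adj z b → z ∈ S₂ → z = a₂)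
    (ha₁ : a₁ ∈ S₁) (ha₂ : a₂ ∈ S₂)
    (hN₁ : (NS H S₁).ncard = S₁.ncard + 1) (hN₂ : (NS H S₂).ncard = S₂.ncard + 1)
    (hc : c ∈ A) (hc₁ : c ∉ S₁) (hc₂ : c ∉ S₂) : S₁ ∩ S₂ = ∅ := by
  by_contra hcontra
  obtain ⟨z, hz⟩ := Set.nonempty_iff_ne_empty.mpr hcontra
  have hQ : NS H (S₁ ∪ S₂) = NS H S₁ ∪ NS H S₂ := by
    ext v
    constructor
    · rintro ⟨s, hs | hs, hsv⟩
      exacts [Or.inl ⟨s, hs, hsv⟩, Or.inr ⟨s, hs, hsv⟩]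
    · rintro (⟨s, hs, hsv⟩ | ⟨s, hs, hsv⟩)
      exacts [⟨s, Or.inl hs, hsv⟩, ⟨s, Or.inr hs, hsv⟩]
  have hPsub : NS H (S₁ ∩ S₂) ∪ {b} ⊆ NS H S₁ ∩ NS H S₂ := by
    rintro v (⟨s, hs, hsv⟩ | hv)
    · exact ⟨⟨s, hs.1, hsv⟩, ⟨s, hs.2, hsv⟩⟩
    · rw [Set.mem_singleton_iff] at hv
      subst hv
      exact ⟨⟨a₁, ha₁, h1⟩, ⟨a₂, ha₂, h2⟩⟩
  have hbP : b ∉ NS H (S₁ ∩ S₂) := by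
    rintro ⟨s, hs, hsb⟩
    exact h12 ((hk₁ s hsb hs.1).symm.trans (hk₂ s hsb hs.2))
  have hc1 : (NS H (S₁ ∩ S₂)).ncard + 1 ≤ (NS H S₁ ∩ NS H S₂).ncard := by
    have hle := Set.ncard_le_ncard hPsub (Set.toFinite _)
    have heq : (NS H (S₁ ∩ S₂) ∪ {b}).ncard = (NS H (S₁ ∩ S₂)).ncard + 1 := by
      rw [Set.ncard_union_eq (Set.disjoint_singleton_right.mpr hbP)
        (Set.toFinite _) (Set.toFinite _), Set.ncard_singleton]
    omega
  have hsur₁ := surplus (S := S₁ ∩ S₂) hP hMC (fun v hv => hS₁A hv.1) ⟨z, hz⟩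
    ⟨c, hc, fun h => hc₁ h.1⟩
  have hsur₂ := surplus (S := S₁ ∪ S₂) hP hMC
    (fun v hv => by rcases hv with h | h; exacts [hS₁A h, hS₂A h])
    ⟨a₁, Or.inl ha₁⟩ ⟨c, hc, by rintro (h | h); exacts [hc₁ h, hc₂ h]⟩
  rw [hQ] at hsur₂
  have hie₁ := Set.ncard_inter_add_ncard_union S₁ S₂ (Set.toFinite _) (Set.toFinite _)
  have hie₂ := Set.ncard_inter_add_ncard_union (NS H S₁) (NS H S₂)
    (Set.toFinite _) (Set.toFinite _)
  omega

lemma token [Fintype V] {G : SimpleGraph V} {α β : Sym2 V} {A B : Set V}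
    (hP : BipartitionOf (G.deleteEdges {α, β}) A B) (hbc : BicriticalGraph G)
    {S : Set V} {b p q : V} (hbB : b ∈ B) (hSA : S ⊆ A) (hSne : S.Nonempty)
    (hNS : (NS (G.deleteEdges {α, β}) S).ncard = S.ncard + 1)
    (hbNS : b ∈ NS (G.deleteEdges {α, β}) S)
    (hpq : (α = s(p, q) ∧ ∀ v ∈ β, v ∈ B) ∨ (β = s(p, q) ∧ ∀ v ∈ α, v ∈ B)) :
    ∃ z ∈ S, z = p ∨ z = q := by
  classical
  have hpos : 0 < S.ncard := (Set.ncard_pos (Set.toFinite S)).mpr hSne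
  have h1 : 1 < (NS (G.deleteEdges {α, β}) S).ncard := by omega
  obtain ⟨w, hwNS, hwb⟩ := Set.exists_ne_of_one_lt_ncard h1 b
  have hwB : w ∈ B := by
    obtain ⟨c, hcS, hcw⟩ := hwNS
    exact hP.crossAB hcw (hSA hcS)
  have hne : b ≠ w := Ne.symm hwb
  obtain ⟨N, hN⟩ := hbc.2 b w hne
  by_contra hno
  push_neg at hno
  have hSD : ∀ z ∈ S, z ∈ (({b, w} : Set V)ᶜ) := by
    intro z hz
    rw [Set.mem_compl_iff]
    rintro (rfl | h)
    · exact hP.notA hbB (hSA hz)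
    · rw [Set.mem_singleton_iff] at h
      subst h
      exact hP.notA hwB (hSA hz)
  set f : V → V := fun z =>
    if hz : z ∈ (({b, w} : Set V)ᶜ) then (pmP hN ⟨z, hz⟩).1 else z with hf
  have hfmem : ∀ {z : V} (hz : z ∈ (({b, w} : Set V)ᶜ)),
      f z = (pmP hN ⟨z, hz⟩).1 := by
    intro z hz; simp only [hf, dif_pos hz]
  have hmap : ∀ z ∈ S, f z ∈ (NS (G.deleteEdges {α, β}) S) \ {b, w} := by
    intro z hz
    have hzD := hSD z hz
    rw [hfmem hzD]
    have hadj : G.Adj z (pmP hN ⟨z, hzD⟩).1 := N.adj_sub (pmP_adj hN ⟨z, hzD⟩)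
    have hHadj : (G.deleteEdges {α, β}).Adj z (pmP hN ⟨z, hzD⟩).1 := by
      rw [SimpleGraph.deleteEdges_adj]
      refine ⟨hadj, ?_⟩
      rintro (h | h)
      · rcases hpq with ⟨hα, hβB⟩ | ⟨hβ, hαB⟩
        · have hzm : z = p ∨ z = q := by
            have hm : z ∈ s(p, q) := by rw [← hα, ← h]; exact Sym2.mem_mk_left _ _
            exact Sym2.mem_iff.mp hm
          rcases hzm with rfl | rfl
          · exact (hno _ hz).1 rfl
          · exact (hno _ hz).2 rfl
        · have hm : z ∈ α := by rw [← h]; exact Sym2.mem_mk_left _ _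
          exact hP.notB (hSA hz) (hαB z hm)
      · rw [Set.mem_singleton_iff] at h
        rcases hpq with ⟨hα, hβB⟩ | ⟨hβ, hαB⟩
        · have hm : z ∈ β := by rw [← h]; exact Sym2.mem_mk_left _ _
          exact hP.notB (hSA hz) (hβB z hm)
        · have hzm : z = p ∨ z = q := by
            have hm : z ∈ s(p, q) := by rw [← hβ, ← h]; exact Sym2.mem_mk_left _ _
            exact Sym2.mem_iff.mp hm
          rcases hzm with rfl | rfl
          · exact (hno _ hz).1 rfl
          · exact (hno _ hz).2 rfl
    exact ⟨⟨z, hz, hHadj⟩, Set.mem_compl_iff _ _ |>.mp (pmP hN ⟨z, hzD⟩).2⟩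
  have hinj : Set.InjOn f S := by
    intro z hz z' hz' hzz
    rw [hfmem (hSD z hz), hfmem (hSD z' hz')] at hzz
    have := pmP_inj hN (Subtype.coe_injective hzz)
    exact congrArg Subtype.val this
  have hcard : S.ncard ≤ ((NS (G.deleteEdges {α, β}) S) \ {b, w}).ncard :=
    Set.ncard_le_ncard_of_injOn f hmap hinj (Set.toFinite _)
  have hsub : ({b, w} : Set V) ⊆ NS (G.deleteEdges {α, β}) S := by
    rintro v (rfl | hv)
    · exact hbNS
    · rw [Set.mem_singleton_iff] at hv
      subst hv
      exact hwNS
  rw [Set.ncard_diff hsub (Set.toFinite _), Set.ncard_pair hne] at hcard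
  omega

lemma core [Fintype V] {G : SimpleGraph V} {α β : Sym2 V} {A B : Set V}
    (hbrick : BrickGraph G) (hR : RemovableDoubleton G α β)
    (hP : BipartitionOf (G.deleteEdges {α, β}) A B) {b : V} (hbB : b ∈ B)
    {e₁ e₂ e₃ : Sym2 V}
    (he₁ : e₁ ∈ (G.deleteEdges {α, β}).edgeSet) (hb₁ : b ∈ e₁)
    (hn₁ : ¬ RemovableEdge (G.deleteEdges {α, β}) e₁)
    (he₂ : e₂ ∈ (G.deleteEdges {α, β}).edgeSet) (hb₂ : b ∈ e₂)
    (hn₂ : ¬ RemovableEdge (G.deleteEdges {α, β}) e₂)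
    (he₃ : e₃ ∈ (G.deleteEdges {α, β}).edgeSet) (hb₃ : b ∈ e₃)
    (hn₃ : ¬ RemovableEdge (G.deleteEdges {α, β}) e₃)
    (h12 : e₁ ≠ e₂) (h13 : e₁ ≠ e₃) (h23 : e₂ ≠ e₃) : False := by
  classical
  have hMC : MatchingCovered (G.deleteEdges {α, β}) := hR.2.2.2.2
  obtain ⟨a₁, hrep₁, hadj₁⟩ := edge_rep_at he₁ hb₁
  obtain ⟨a₂, hrep₂, hadj₂⟩ := edge_rep_at he₂ hb₂
  obtain ⟨a₃, hrep₃, hadj₃⟩ := edge_rep_at he₃ hb₃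
  have ha12 : a₁ ≠ a₂ := fun h => h12 (by rw [hrep₁, hrep₂, h])
  have ha13 : a₁ ≠ a₃ := fun h => h13 (by rw [hrep₁, hrep₃, h])
  have ha23 : a₂ ≠ a₃ := fun h => h23 (by rw [hrep₂, hrep₃, h])
  have haA : ∀ {a' : V}, (G.deleteEdges {α, β}).Adj a' b → a' ∈ A :=
    fun h => (hP.2.2 h).mpr hbB
  have hnMC : ∀ {e' : Sym2 V} {a' : V}, e' = s(a', b) →
      ¬ RemovableEdge (G.deleteEdges {α, β}) e' →
      e' ∈ (G.deleteEdges {α, β}).edgeSet →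
      ¬ MatchingCovered ((G.deleteEdges {α, β}).deleteEdges {s(a', b)}) := by
    intro e' a' hrep hn he hMC'
    exact hn ⟨he, by rw [hrep]; exact hMC'⟩
  obtain ⟨S₁, hS₁A, ha₁S, hk₁, hN₁⟩ :=
    bad_set hP hMC hadj₁ hadj₂ ha12.symm hbB (hnMC hrep₁ hn₁ he₁)
  obtain ⟨S₂, hS₂A, ha₂S, hk₂, hN₂⟩ :=
    bad_set hP hMC hadj₂ hadj₁ ha12 hbB (hnMC hrep₂ hn₂ he₂)
  obtain ⟨S₃, hS₃A, ha₃S, hk₃, hN₃⟩ :=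
    bad_set hP hMC hadj₃ hadj₁ ha13 hbB (hnMC hrep₃ hn₃ he₃)
  have hout : ∀ {a' : V} {S' : Set V} {aS : V}, a' ≠ aS →
      (G.deleteEdges {α, β}).Adj a' b →
      (∀ z, (G.deleteEdges {α, β}).Adj z b → z ∈ S' → z = aS) → a' ∉ S' :=
    fun hne hadj hk h => hne (hk _ hadj h)
  have d12 := disj hP hMC hadj₁ hadj₂ ha12 hS₁A hS₂A hk₁ hk₂ ha₁S ha₂S hN₁ hN₂
    (haA hadj₃) (hout ha13.symm hadj₃ hk₁) (hout ha23.symm hadj₃ hk₂)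
  have d13 := disj hP hMC hadj₁ hadj₃ ha13 hS₁A hS₃A hk₁ hk₃ ha₁S ha₃S hN₁ hN₃
    (haA hadj₂) (hout ha12.symm hadj₂ hk₁) (hout ha23 hadj₂ hk₃)
  have d23 := disj hP hMC hadj₂ hadj₃ ha23 hS₂A hS₃A hk₂ hk₃ ha₂S ha₃S hN₂ hN₃
    (haA hadj₁) (hout ha12 hadj₁ hk₂) (hout ha13 hadj₁ hk₃)
  obtain ⟨p, q, hpA, hqA, hpq⟩ := sides hP hbrick.2 hbrick.2.1 hR
  obtain ⟨z₁, hz₁S, hz₁⟩ := token hP hbrick.2 hbB hS₁A ⟨a₁, ha₁S⟩ hN₁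
    ⟨a₁, ha₁S, hadj₁⟩ hpq
  obtain ⟨z₂, hz₂S, hz₂⟩ := token hP hbrick.2 hbB hS₂A ⟨a₂, ha₂S⟩ hN₂
    ⟨a₂, ha₂S, hadj₂⟩ hpq
  obtain ⟨z₃, hz₃S, hz₃⟩ := token hP hbrick.2 hbB hS₃A ⟨a₃, ha₃S⟩ hN₃
    ⟨a₃, ha₃S, hadj₃⟩ hpq
  have hzne : ∀ {u v : V} {Su Sv : Set V}, Su ∩ Sv = ∅ → u ∈ Su → v ∈ Sv → u ≠ v := by
    rintro u v Su Sv hE hu hv rfl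
    have hm : u ∈ Su ∩ Sv := ⟨hu, hv⟩
    rw [hE] at hm
    exact hm
  have n12 := hzne d12 hz₁S hz₂S
  have n13 := hzne d13 hz₁S hz₃S
  have n23 := hzne d23 hz₂S hz₃S
  rcases hz₁ with rfl | rfl <;> rcases hz₂ with rfl | rfl <;> rcases hz₃ with rfl | rfl <;>
    first
      | exact n12 rfl
      | exact n13 rfl
      | exact n23 rfl

end Stmt7Aux


/-- at most two edges of `H = G − R` incident with any vertex are
non-removable in `H`. -/
theorem stmt7 {V : Type*} [Fintype V] (G : SimpleGraph V) (α β : Sym2 V)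
    (hbrick : BrickGraph G) (hR : RemovableDoubleton G α β) (b : V) :
    Set.ncard {e : Sym2 V | e ∈ (G.deleteEdges {α, β}).edgeSet ∧ b ∈ e ∧
      ¬ RemovableEdge (G.deleteEdges {α, β}) e} ≤ 2 := by
  classical
  by_contra hcon
  push_neg at hcon
  obtain ⟨e₁, e₂, e₃, h1, h2, h3, h12, h13, h23⟩ :=
    (Set.two_lt_ncard_iff (Set.toFinite _)).mp hcon
  obtain ⟨he₁, hb₁, hn₁⟩ := h1
  obtain ⟨he₂, hb₂, hn₂⟩ := h2
  obtain ⟨he₃, hb₃, hn₃⟩ := h3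
  obtain ⟨A, B, hP⟩ := hR.2.2.2.1
  rcases hP.mem_or b with hbA | hbB
  · exact core hbrick hR hP.symm hbA he₁ hb₁ hn₁ he₂ hb₂ hn₂ he₃ hb₃ hn₃ h12 h13 h23
  · exact core hbrick hR hP hbB he₁ hb₁ hn₁ he₂ hb₂ hn₂ he₃ hb₃ hn₃ h12 h13 h23
end

section
/- Let H be a simple bipartite matching covered graph with color classes A and B, let b ∈ B be a vertex of degree d ≥ 3, and let ba_1, ba_2, …, ba_d be the edges of H incident with b. Suppose that the edges ba_1, …, ba_r, where 0 < r ≤ d, are all non-removable in H. Then there exist a partition of A into parts A_0, A_1, …, A_r and a partition of B into parts B_0, B_1, …, B_r (the parts A_i and B_i for 1 ≤ i ≤ r being nonempty) such that b ∈ B_0 and, for every i ∈ {1, 2, …, r}: (i) |A_i| = |B_i|, (ii) a_i ∈ A_i, and (iii) the neighbourhood of A_i in H is exactly B_i ∪ {b}; in particular, ba_i is the only edge of H joining a vertex of B_0 to a vertex of A_i. -/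
set_option linter.unusedSectionVars false

section LV

variable {V : Type*} [Fintype V]

/-- Neighbourhood of a set. -/
def nbhd (G : SimpleGraph V) (X : Set V) : Set V := {v : V | ∃ x ∈ X, G.Adj x v}

lemma nbhd_mono {G : SimpleGraph V} {X Y : Set V} (h : X ⊆ Y) : nbhd G X ⊆ nbhd G Y := by
  rintro v ⟨x, hx, hadj⟩; exact ⟨x, h hx, hadj⟩

noncomputable def pmF {G : SimpleGraph V} {M : G.Subgraph}
    (hM : M.IsPerfectMatching) (v : V) : V :=
  (hM.1 (hM.2 v)).choose

lemma pmF_adj {G : SimpleGraph V} {M : G.Subgraph} (hM : M.IsPerfectMatching) (v : V) :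
    M.Adj v (pmF hM v) := (hM.1 (hM.2 v)).choose_spec.1

lemma pmF_eq {G : SimpleGraph V} {M : G.Subgraph} (hM : M.IsPerfectMatching) {v w : V}
    (h : M.Adj v w) : pmF hM v = w := ((hM.1 (hM.2 v)).choose_spec.2 w h).symm

lemma pmF_invol {G : SimpleGraph V} {M : G.Subgraph} (hM : M.IsPerfectMatching) (v : V) :
    pmF hM (pmF hM v) = v := pmF_eq hM (pmF_adj hM v).symm

lemma pmF_inj {G : SimpleGraph V} {M : G.Subgraph} (hM : M.IsPerfectMatching) :
    Function.Injective (pmF hM) := fun x y h => by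
  rw [← pmF_invol hM x, h, pmF_invol]

lemma bip_other {G : SimpleGraph V} {A B : Set V} (hbip : BipartitionOf G A B)
    {u v : V} (h : G.Adj u v) (hu : u ∈ B) : v ∈ A := by
  have hna : u ∉ A := fun hA => Set.disjoint_left.mp hbip.2.1 hA hu
  have : v ∉ B := fun hB => hna ((hbip.2.2 h).mpr hB)
  have huniv : v ∈ A ∪ B := by
    have := Set.mem_univ v
    rwa [← hbip.1] at this
  exact huniv.resolve_right this

lemma bip_memB {G : SimpleGraph V} {A B : Set V} (hbip : BipartitionOf G A B)
    {u v : V} (h : G.Adj u v) (hu : u ∈ A) : v ∈ B := (hbip.2.2 h).mp hu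

lemma bip_AorB {G : SimpleGraph V} {A B : Set V} (hbip : BipartitionOf G A B)
    (v : V) : v ∈ A ∨ v ∈ B := by
  have := Set.mem_univ v
  rw [← hbip.1] at this
  exact this

lemma bip_notB {G : SimpleGraph V} {A B : Set V} (hbip : BipartitionOf G A B)
    {v : V} (hv : v ∈ A) : v ∉ B := fun hB => Set.disjoint_left.mp hbip.2.1 hv hB

/-- a matching covered graph has a perfect matching -/
lemma MC_exists_pm {G : SimpleGraph V} (hMC : MatchingCovered G) :
    ∃ M : G.Subgraph, M.IsPerfectMatching := by
  obtain ⟨hcard, hconn, hpm⟩ := hMC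
  rw [Nat.card_eq_fintype_card] at hcard
  have : Nontrivial V := Fintype.one_lt_card_iff_nontrivial.mp (by omega)
  obtain ⟨u, v, huv⟩ := exists_pair_ne V
  obtain ⟨w⟩ := hconn.preconnected u v
  cases w with
  | nil => exact absurd rfl huv
  | cons h p =>
    obtain ⟨M, hM, -⟩ := hpm _ ((SimpleGraph.mem_edgeSet _).mpr h)
    exact ⟨M, hM⟩

/-- color classes of a graph with a perfect matching have the same size -/
lemma bip_card_eq {G : SimpleGraph V} {A B : Set V} (hbip : BipartitionOf G A B)
    {M : G.Subgraph} (hM : M.IsPerfectMatching) : A.ncard = B.ncard := by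
  set f := pmF hM
  have himg : f '' A = B := by
    apply Set.Subset.antisymm
    · rintro v ⟨x, hx, rfl⟩
      exact bip_memB hbip (M.adj_sub (pmF_adj hM x)) hx
    · intro v hv
      have : f v ∈ A := bip_other hbip (M.adj_sub (pmF_adj hM v)) hv
      exact ⟨f v, this, pmF_invol hM v⟩
  rw [← himg, Set.ncard_image_of_injective _ (pmF_inj hM)]

lemma exists_crossing {G : SimpleGraph V} {S : Set V} :
    ∀ {z x : V}, G.Walk z x → x ∈ S → z ∉ S → ∃ u w, u ∉ S ∧ w ∈ S ∧ G.Adj u w := by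
  intro z x w
  induction w with
  | nil => intro hx hz; exact absurd hx hz
  | @cons u v _ h p ih =>
    intro hx hz
    by_cases hv : v ∈ S
    · exact ⟨u, v, hz, hv, h⟩
    · exact ih hx hv

/-- strict Hall condition for matching covered bipartite graphs -/
lemma strictHall {G : SimpleGraph V} {A B : Set V} (hMC : MatchingCovered G)
    (hbip : BipartitionOf G A B) {X : Set V} (hXA : X ⊆ A) (hne : X.Nonempty)
    (hpr : (A \ X).Nonempty) : X.ncard + 1 ≤ (nbhd G X).ncard := by
  obtain ⟨x, hx⟩ := hne
  obtain ⟨z, hzA, hzX⟩ := hpr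
  set Y := nbhd G X with hY
  have hYB : Y ⊆ B := by
    rintro v ⟨x', hx', hadj⟩
    exact bip_memB hbip hadj (hXA hx')
  have hzS : z ∉ X ∪ Y := by
    rintro (h | h)
    · exact hzX h
    · exact bip_notB hbip hzA (hYB h)
  obtain ⟨w0⟩ := hMC.2.1.preconnected z x
  obtain ⟨u, w, hu, hw, hadj⟩ := exists_crossing w0 (Or.inl hx) hzS
  have hwY : w ∈ Y := by
    rcases hw with hw | hw
    · exact absurd ⟨w, hw, hadj.symm⟩ (fun h => hu (Or.inr h))
    · exact hw
  have huA : u ∈ A := bip_other hbip hadj.symm (hYB hwY)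
  have huX : u ∉ X := fun h => hu (Or.inl h)
  obtain ⟨M, hM, hme⟩ := hMC.2.2 s(u, w) ((SimpleGraph.mem_edgeSet _).mpr hadj)
  have hMuw : M.Adj u w := SimpleGraph.Subgraph.mem_edgeSet.mp hme
  have hfu : pmF hM u = w := pmF_eq hM hMuw
  have himg : (pmF hM) '' X ⊆ Y \ {w} := by
    rintro v ⟨x', hx', rfl⟩
    refine ⟨⟨x', hx', M.adj_sub (pmF_adj hM x')⟩, ?_⟩
    intro hvw
    simp only [Set.mem_singleton_iff] at hvw
    have hxu : x' = u := pmF_inj hM (hvw.trans hfu.symm)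
    exact huX (hxu ▸ hx')
  have h1 : X.ncard ≤ (Y \ {w}).ncard := by
    rw [← Set.ncard_image_of_injective X (pmF_inj hM)]
    exact Set.ncard_le_ncard himg (Y \ {w}).toFinite
  have h2 : (Y \ {w}).ncard + 1 = Y.ncard := Set.ncard_diff_singleton_add_one hwY
  omega


/-- Construct a perfect matching through a given edge from the strict Hall
condition. -/
lemma pm_through_edge_s8 {V : Type*} [Fintype V] (G' : SimpleGraph V) (A B : Set V)
    (hbip : BipartitionOf G' A B) (hAB : A.ncard = B.ncard)
    (hhall : ∀ X : Set V, X ⊆ A → X.Nonempty → (A \ X).Nonempty →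
      X.ncard + 1 ≤ (nbhd G' X).ncard)
    (p q : V) (hpq : G'.Adj p q) (hp : p ∈ A) :
    ∃ M : G'.Subgraph, M.IsPerfectMatching ∧ M.Adj p q := by
  classical
  have hq : q ∈ B := bip_memB hbip hpq hp
  have hpcreated : p ∉ (A \ {p}) := fun h => h.2 rfl
  have hAq : q ∉ A := fun h => bip_notB hbip h hq
  have hBp : p ∉ B := bip_notB hbip hp
  set A' : Set V := A \ {p} with hA'def
  set B' : Set V := B \ {q} with hB'def
  let t : ↥A' → Finset V := fun x => Finset.univ.filter (fun v => G'.Adj x.val v ∧ v ≠ q)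
  have ht : ∀ (x : ↥A') (v : V), v ∈ t x ↔ G'.Adj x.val v ∧ v ≠ q := by
    intro x v; simp [t]
  have hallcond : ∀ s : Finset ↥A', s.card ≤ (s.biUnion t).card := by
    intro s
    rcases s.eq_empty_or_nonempty with rfl | hsne
    · simp
    · set X : Set V := Subtype.val '' (↑s : Set ↥A') with hXdef
      have hXA : X ⊆ A := by
        rintro v ⟨x, -, rfl⟩; exact x.2.1
      have hXne : X.Nonempty := by
        obtain ⟨x, hxs⟩ := hsne
        exact ⟨x.val, x, hxs, rfl⟩
      have hpX : p ∉ X := by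
        rintro ⟨x, -, hxv⟩; exact x.2.2 hxv
      have hsub : nbhd G' X ⊆ ↑(s.biUnion t) ∪ {q} := by
        rintro v ⟨x, ⟨xs, hxs, rfl⟩, hadj⟩
        by_cases hvq : v = q
        · exact Or.inr hvq
        · refine Or.inl ?_
          simp only [Finset.coe_biUnion, Set.mem_iUnion, Finset.mem_coe]
          exact ⟨xs, hxs, (ht xs v).mpr ⟨hadj, hvq⟩⟩
      have hXcard : X.ncard = s.card := by
        rw [hXdef, Set.ncard_image_of_injective _ Subtype.val_injective,
          Set.ncard_coe_finset]
      have h1 : X.ncard + 1 ≤ (nbhd G' X).ncard :=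
        hhall X hXA hXne ⟨p, hp, hpX⟩
      have h2 : (nbhd G' X).ncard ≤ (s.biUnion t).card + 1 := by
        calc (nbhd G' X).ncard ≤ (↑(s.biUnion t) ∪ {q} : Set V).ncard :=
              Set.ncard_le_ncard hsub (Set.toFinite _)
          _ ≤ (↑(s.biUnion t) : Set V).ncard + ({q} : Set V).ncard :=
              Set.ncard_union_le _ _
          _ = (s.biUnion t).card + 1 := by
              rw [Set.ncard_coe_finset, Set.ncard_singleton]
      omega
  obtain ⟨f, hfinj, hft⟩ :=
    (Finset.all_card_le_biUnion_card_iff_existsInjective' t).mp hallcond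
  have hfadj : ∀ x : ↥A', G'.Adj x.val (f x) := fun x => ((ht x (f x)).mp (hft x)).1
  have hfq : ∀ x : ↥A', f x ≠ q := fun x => ((ht x (f x)).mp (hft x)).2
  have hfB' : ∀ x : ↥A', f x ∈ B' := fun x =>
    ⟨bip_memB hbip (hfadj x) x.2.1, hfq x⟩
  have hrange : Set.range f = B' := by
    apply Set.eq_of_subset_of_ncard_le
    · rintro v ⟨x, rfl⟩; exact hfB' x
    · have h1 : (Set.range f).ncard = A'.ncard := by
        rw [← Set.image_univ, Set.ncard_image_of_injective _ hfinj, Set.ncard_univ,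
          Nat.card_coe_set_eq]
      have h2 : A'.ncard = A.ncard - 1 := Set.ncard_diff_singleton_of_mem hp
      have h3 : B'.ncard = B.ncard - 1 := Set.ncard_diff_singleton_of_mem hq
      omega
    · exact Set.toFinite _
  let M : G'.Subgraph :=
    { verts := Set.univ
      Adj := fun x y => (x = p ∧ y = q) ∨ (x = q ∧ y = p) ∨
        (∃ hx : x ∈ A', f ⟨x, hx⟩ = y) ∨ (∃ hy : y ∈ A', f ⟨y, hy⟩ = x)
      adj_sub := by
        rintro x y (⟨rfl, rfl⟩ | ⟨rfl, rfl⟩ | ⟨hx, rfl⟩ | ⟨hy, rfl⟩)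
        · exact hpq
        · exact hpq.symm
        · exact hfadj ⟨x, hx⟩
        · exact (hfadj ⟨y, hy⟩).symm
      edge_vert := fun _ => Set.mem_univ _
      symm := by
        constructor
        rintro x y (⟨rfl, rfl⟩ | ⟨rfl, rfl⟩ | ⟨hx, rfl⟩ | ⟨hy, h⟩)
        · exact Or.inr (Or.inl ⟨rfl, rfl⟩)
        · exact Or.inl ⟨rfl, rfl⟩
        · exact Or.inr (Or.inr (Or.inr ⟨hx, rfl⟩))
        · exact Or.inr (Or.inr (Or.inl ⟨hy, h⟩)) }
  have hMadj : ∀ x y : V, M.Adj x y ↔ ((x = p ∧ y = q) ∨ (x = q ∧ y = p) ∨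
      (∃ hx : x ∈ A', f ⟨x, hx⟩ = y) ∨ (∃ hy : y ∈ A', f ⟨y, hy⟩ = x)) := by
    intro x y; rfl
  refine ⟨M, ⟨?_, fun v => Set.mem_univ v⟩, Or.inl ⟨rfl, rfl⟩⟩
  intro v _
  by_cases hvp : v = p
  · subst hvp
    refine ⟨q, Or.inl ⟨rfl, rfl⟩, ?_⟩
    rintro y (⟨-, rfl⟩ | ⟨hq', -⟩ | ⟨hx, -⟩ | ⟨hy, heq⟩)
    · rfl
    · exact absurd hq' hpq.ne
    · exact absurd hx hpcreated
    · exact absurd ((heq ▸ hfB' ⟨y, hy⟩).1) hBp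
  · by_cases hvq : v = q
    · subst hvq
      refine ⟨p, Or.inr (Or.inl ⟨rfl, rfl⟩), ?_⟩
      rintro y (⟨hq', -⟩ | ⟨-, rfl⟩ | ⟨hx, -⟩ | ⟨hy, heq⟩)
      · exact absurd hq' hpq.ne'
      · rfl
      · exact absurd hx.1 hAq
      · exact absurd heq (hfq ⟨y, hy⟩)
    · rcases bip_AorB hbip v with hvA | hvB
      · have hvA' : v ∈ A' := ⟨hvA, hvp⟩
        refine ⟨f ⟨v, hvA'⟩, Or.inr (Or.inr (Or.inl ⟨hvA', rfl⟩)), ?_⟩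
        rintro y (⟨rfl, -⟩ | ⟨rfl, -⟩ | ⟨hx, rfl⟩ | ⟨hy, heq⟩)
        · exact absurd rfl hvp
        · exact absurd rfl hvq
        · rfl
        · exact absurd (heq ▸ (hfB' ⟨y, hy⟩).1) (bip_notB hbip hvA)
      · have hvB' : v ∈ B' := ⟨hvB, hvq⟩
        rw [← hrange] at hvB'
        obtain ⟨x₀, hx₀⟩ := hvB'
        refine ⟨x₀.val, Or.inr (Or.inr (Or.inr ⟨x₀.2, ?_⟩)), ?_⟩
        · exact hx₀
        · rintro y (⟨rfl, -⟩ | ⟨rfl, -⟩ | ⟨hx, -⟩ | ⟨hy, heq⟩)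
          · exact absurd hvB hBp
          · exact absurd rfl hvq
          · exact absurd hvB (bip_notB hbip hx.1)
          · have : (⟨y, hy⟩ : ↥A') = x₀ := hfinj (heq.trans hx₀.symm)
            exact congrArg Subtype.val this

lemma MC_of_strictHall {V : Type*} [Fintype V] (G' : SimpleGraph V) (A B : Set V)
    (hbip : BipartitionOf G' A B) (hAB : A.ncard = B.ncard)
    (hcard : 2 ≤ Nat.card V) (hconn : G'.Connected)
    (hhall : ∀ X : Set V, X ⊆ A → X.Nonempty → (A \ X).Nonempty →
      X.ncard + 1 ≤ (nbhd G' X).ncard) : MatchingCovered G' := by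
  refine ⟨hcard, hconn, ?_⟩
  intro e he
  induction e using Sym2.ind with
  | _ x y =>
    have hadj : G'.Adj x y := (SimpleGraph.mem_edgeSet _).mp he
    rcases bip_AorB hbip x with hx | hx
    · obtain ⟨M, hM, hMa⟩ := pm_through_edge_s8 G' A B hbip hAB hhall x y hadj hx
      exact ⟨M, hM, SimpleGraph.Subgraph.mem_edgeSet.mpr hMa⟩
    · have hy : y ∈ A := bip_other hbip hadj hx
      obtain ⟨M, hM, hMa⟩ := pm_through_edge_s8 G' A B hbip hAB hhall y x hadj.symm hy
      refine ⟨M, hM, ?_⟩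
      rw [Sym2.eq_swap]
      exact SimpleGraph.Subgraph.mem_edgeSet.mpr hMa

lemma extract {V : Type*} [Fintype V] {H : SimpleGraph V} {A B : Set V}
    (hMC : MatchingCovered H) (hbip : BipartitionOf H A B)
    {b : V} (hb : b ∈ B) {d : ℕ} (hd : 3 ≤ d) {a : Fin d → V}
    (hainj : Function.Injective a) (hnbhd : H.neighborSet b = Set.range a)
    (i : Fin d) (hnr : ¬ RemovableEdge H s(b, a i)) :
    ∃ X Bi : Set V, X ⊆ A ∧ Bi ⊆ B ∧ a i ∈ X ∧ b ∉ Bi ∧ X.ncard = Bi.ncard ∧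
      nbhd H X = Bi ∪ {b} ∧ (∀ j : Fin d, j ≠ i → a j ∉ X) := by
  classical
  have hadjb : ∀ j : Fin d, H.Adj b (a j) := by
    intro j
    have : a j ∈ H.neighborSet b := by rw [hnbhd]; exact Set.mem_range_self j
    exact this
  have haA : ∀ j : Fin d, a j ∈ A := fun j => bip_other hbip (hadjb j) hb
  have hab_ne : ∀ j : Fin d, a j ≠ b := fun j h =>
    bip_notB hbip (haA j) (h ▸ hb)
  set e : Sym2 V := s(b, a i) with hedef
  have hedge : e ∈ H.edgeSet := (SimpleGraph.mem_edgeSet _).mpr (hadjb i)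
  obtain ⟨M₀, hM₀⟩ := MC_exists_pm hMC
  have hAB : A.ncard = B.ncard := bip_card_eq hbip hM₀
  set G' : SimpleGraph V := H.deleteEdges {e} with hG'def
  have hG'le : ∀ {x y : V}, G'.Adj x y → H.Adj x y := by
    intro x y h
    exact (SimpleGraph.deleteEdges_adj.mp h).1
  have hG'adj : ∀ {x y : V}, H.Adj x y → s(x, y) ≠ e → G'.Adj x y := by
    intro x y h hne
    rw [hG'def, SimpleGraph.deleteEdges_adj]
    exact ⟨h, by simpa using hne⟩
  have hbip' : BipartitionOf G' A B :=
    ⟨hbip.1, hbip.2.1, fun u v h => hbip.2.2 (hG'le h)⟩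
  have hMC' : ¬ MatchingCovered G' := fun h => hnr ⟨hedge, h⟩
  have hcard2 : 2 ≤ Nat.card V := hMC.1
  -- the edge e = s(b, a i) is the only edge from b into any set avoiding the other aⱼ
  have hsplit : ∀ {x y : V}, H.Adj x y → s(x, y) = e → x ∈ A → x = a i ∧ y = b := by
    intro x y hxy hse hxA
    rcases Sym2.eq_iff.mp hse with ⟨rfl, rfl⟩ | ⟨h1, h2⟩
    · exact absurd hb (bip_notB hbip hxA)
    · exact ⟨h1, h2⟩
  have hkey : ∃ X : Set V, X ⊆ A ∧ X.Nonempty ∧ (A \ X).Nonempty ∧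
      (nbhd G' X).ncard ≤ X.ncard := by
    by_cases hconn : G'.Connected
    · by_contra hno
      push_neg at hno
      exact hMC' (MC_of_strictHall G' A B hbip' hAB hcard2 hconn
        (fun X h1 h2 h3 => hno X h1 h2 h3))
    · exfalso
      set S : Set V := {v : V | G'.Reachable (a i) v} with hSdef
      have hSclosed : ∀ {x y : V}, x ∈ S → G'.Adj x y → y ∈ S := by
        intro x y hx hxy
        exact hx.trans hxy.reachable
      by_cases hbS : b ∈ S
      · apply hconn
        have hstep : ∀ {x y : V}, H.Adj x y → G'.Reachable x y := by
          intro x y hxy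
          by_cases hxe : s(x, y) = e
          · have hbr : G'.Reachable (a i) b := hbS
            rcases Sym2.eq_iff.mp hxe with ⟨h1, h2⟩ | ⟨h1, h2⟩
            · rw [h1, h2]; exact hbr.symm
            · rw [h1, h2]; exact hbr
          · exact (hG'adj hxy hxe).reachable
        have htrans : ∀ {x y : V}, H.Reachable x y → G'.Reachable x y := by
          intro x y hr
          obtain ⟨w⟩ := hr
          induction w with
          | nil => exact SimpleGraph.Reachable.refl _
          | cons h p ih => exact (hstep h).trans ih
        haveI : Nonempty V := ⟨b⟩
        exact ⟨fun x y => htrans (hMC.2.1.preconnected x y)⟩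
      · set X : Set V := S ∩ A with hXdef
        set Y : Set V := S ∩ B with hYdef
        have haiS : a i ∈ S := SimpleGraph.Reachable.refl _
        have haiX : a i ∈ X := ⟨haiS, haA i⟩
        obtain ⟨k, hki⟩ : ∃ k : Fin d, k ≠ i := by
          rcases eq_or_ne i.val 0 with h0 | h0
          · exact ⟨⟨1, by omega⟩, fun h => by simp [Fin.ext_iff, h0] at h⟩
          · exact ⟨⟨0, by omega⟩, fun h => h0 (by simpa [Fin.ext_iff] using h.symm)⟩
        have hakS : a k ∉ S := by
          intro h
          apply hbS
          refine hSclosed h (hG'adj (hadjb k).symm ?_)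
          intro hse
          rcases Sym2.eq_iff.mp hse with ⟨h1, -⟩ | ⟨h1, -⟩
          · exact hab_ne k h1
          · exact hki (hainj h1)
        have hakAX : a k ∈ A \ X := ⟨haA k, fun h => hakS h.1⟩
        obtain ⟨M, hM, hme⟩ := hMC.2.2 e hedge
        have hMba : M.Adj b (a i) := SimpleGraph.Subgraph.mem_edgeSet.mp hme
        have hfb : pmF hM b = a i := pmF_eq hM hMba
        have hfai : pmF hM (a i) = b := pmF_eq hM hMba.symm
        have himg : (pmF hM) '' Y ⊆ X \ {a i} := by
          rintro v ⟨y, ⟨hyS, hyB⟩, rfl⟩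
          have hHadj : H.Adj y (pmF hM y) := M.adj_sub (pmF_adj hM y)
          have hne : s(y, pmF hM y) ≠ e := by
            intro hse
            rcases Sym2.eq_iff.mp hse with ⟨rfl, -⟩ | ⟨rfl, -⟩
            · exact hbS hyS
            · exact bip_notB hbip (haA i) hyB
          have hfS : pmF hM y ∈ S := hSclosed hyS (hG'adj hHadj hne)
          have hfA : pmF hM y ∈ A := bip_other hbip hHadj hyB
          refine ⟨⟨hfS, hfA⟩, ?_⟩
          intro hfeq
          simp only [Set.mem_singleton_iff] at hfeq
          have hyb : y = b := pmF_inj hM (hfeq.trans hfb.symm)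
          exact hbS (hyb ▸ hyS)
        have hYcard : Y.ncard ≤ (X \ {a i}).ncard := by
          rw [← Set.ncard_image_of_injective Y (pmF_inj hM)]
          exact Set.ncard_le_ncard himg (Set.toFinite _)
        have hXcard : (X \ {a i}).ncard + 1 = X.ncard :=
          Set.ncard_diff_singleton_add_one haiX
        have hsubN : nbhd H X ⊆ Y ∪ {b} := by
          rintro v ⟨x, ⟨hxS, hxA⟩, hadj⟩
          by_cases hse : s(x, v) = e
          · exact Or.inr (hsplit hadj hse hxA).2
          · have hvS : v ∈ S := hSclosed hxS (hG'adj hadj hse)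
            exact Or.inl ⟨hvS, bip_memB hbip hadj hxA⟩
        have hSH : X.ncard + 1 ≤ (nbhd H X).ncard :=
          strictHall hMC hbip (fun v hv => hv.2) ⟨a i, haiX⟩ ⟨a k, hakAX⟩
        have hNle : (nbhd H X).ncard ≤ Y.ncard + 1 := by
          calc (nbhd H X).ncard ≤ (Y ∪ {b}).ncard :=
                Set.ncard_le_ncard hsubN (Set.toFinite _)
            _ ≤ Y.ncard + ({b} : Set V).ncard := Set.ncard_union_le _ _
            _ = Y.ncard + 1 := by rw [Set.ncard_singleton]
        omega
  obtain ⟨X, hXA, hXne, hXpr, hdef⟩ := hkey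
  set Bi : Set V := nbhd G' X with hBidef
  have hBiB : Bi ⊆ B := by
    rintro v ⟨x, hx, hadj⟩
    exact bip_memB hbip' hadj (hXA hx)
  have hsub2 : Bi ⊆ nbhd H X := by
    rintro v ⟨x, hx, hadj⟩
    exact ⟨x, hx, hG'le hadj⟩
  have hsub : nbhd H X ⊆ Bi ∪ {b} := by
    rintro v ⟨x, hx, hadj⟩
    by_cases hse : s(x, v) = e
    · exact Or.inr (hsplit hadj hse (hXA hx)).2
    · exact Or.inl ⟨x, hx, hG'adj hadj hse⟩
  have hSH : X.ncard + 1 ≤ (nbhd H X).ncard := strictHall hMC hbip hXA hXne hXpr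
  have hNle : (nbhd H X).ncard ≤ Bi.ncard + 1 := by
    calc (nbhd H X).ncard ≤ (Bi ∪ {b}).ncard :=
          Set.ncard_le_ncard hsub (Set.toFinite _)
      _ ≤ Bi.ncard + ({b} : Set V).ncard := Set.ncard_union_le _ _
      _ = Bi.ncard + 1 := by rw [Set.ncard_singleton]
  have hbBi : b ∉ Bi := by
    intro hbmem
    have hsub' : nbhd H X ⊆ Bi := by
      intro v hv
      rcases hsub hv with h | h
      · exact h
      · exact h ▸ hbmem
    have := Set.ncard_le_ncard hsub' (Set.toFinite _)
    omega
  have hbN : b ∈ nbhd H X := by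
    by_contra hbN
    have hsub' : nbhd H X ⊆ Bi := by
      intro v hv
      rcases hsub hv with h | h
      · exact h
      · exact absurd (h ▸ hv) hbN
    have := Set.ncard_le_ncard hsub' (Set.toFinite _)
    omega
  have hcardeq : X.ncard = Bi.ncard := by
    have := Set.ncard_le_ncard hsub2 (Set.toFinite _)
    omega
  have hNeq : nbhd H X = Bi ∪ {b} := by
    apply Set.Subset.antisymm hsub
    rintro v (hv | hv)
    · exact hsub2 hv
    · exact hv ▸ hbN
  have haiX : a i ∈ X := by
    obtain ⟨x, hx, hadj⟩ := hbN
    by_cases hse : s(x, b) = e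
    · have := (hsplit hadj hse (hXA hx)).1
      exact this ▸ hx
    · exact absurd ⟨x, hx, hG'adj hadj hse⟩ hbBi
  have hnotaj : ∀ j : Fin d, j ≠ i → a j ∉ X := by
    intro j hji hjX
    apply hbBi
    refine ⟨a j, hjX, hG'adj (hadjb j).symm ?_⟩
    intro hse
    rcases Sym2.eq_iff.mp hse with ⟨h1, -⟩ | ⟨h1, -⟩
    · exact hab_ne j h1
    · exact hji (hainj h1)
  exact ⟨X, Bi, hXA, hBiB, haiX, hbBi, hcardeq, hNeq, hnotaj⟩

lemma disjointXB {V : Type*} [Fintype V] {H : SimpleGraph V} {A B : Set V}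
    (hMC : MatchingCovered H) (hbip : BipartitionOf H A B)
    {b : V} (hb : b ∈ B) {d : ℕ} (hd : 3 ≤ d) {a : Fin d → V}
    (hainj : Function.Injective a) (hnbhd : H.neighborSet b = Set.range a)
    {i j : Fin d} (hij : i ≠ j) {Xi Bi Xj Bj : Set V}
    (hXiA : Xi ⊆ A) (hXic : Xi.ncard = Bi.ncard) (hNi : nbhd H Xi = Bi ∪ {b})
    (hbBi : b ∉ Bi) (hmi : ∀ m : Fin d, m ≠ i → a m ∉ Xi)
    (hXjA : Xj ⊆ A) (hXjc : Xj.ncard = Bj.ncard) (hNj : nbhd H Xj = Bj ∪ {b})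
    (hbBj : b ∉ Bj) (hmj : ∀ m : Fin d, m ≠ j → a m ∉ Xj) :
    Xi ∩ Xj = ∅ ∧ Bi ∩ Bj = ∅ := by
  classical
  have hadjb : ∀ m : Fin d, H.Adj b (a m) := by
    intro m
    have : a m ∈ H.neighborSet b := by rw [hnbhd]; exact Set.mem_range_self m
    exact this
  have haA : ∀ m : Fin d, a m ∈ A := fun m => bip_other hbip (hadjb m) hb
  obtain ⟨n, hnd, hni, hnj⟩ : ∃ n, n < d ∧ n ≠ i.val ∧ n ≠ j.val := by
    rcases eq_or_ne i.val 0 with h0 | h0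
    · rcases eq_or_ne j.val 1 with h1 | h1
      · exact ⟨2, by omega, by omega, by omega⟩
      · exact ⟨1, by omega, by omega, by omega⟩
    · rcases eq_or_ne j.val 0 with h1 | h1
      · rcases eq_or_ne i.val 1 with h2 | h2
        · exact ⟨2, by omega, by omega, by omega⟩
        · exact ⟨1, by omega, by omega, by omega⟩
      · exact ⟨0, by omega, by omega, by omega⟩
  set k : Fin d := ⟨n, hnd⟩ with hkdef
  have hki : k ≠ i := fun h => hni (congrArg Fin.val h)
  have hkj : k ≠ j := fun h => hnj (congrArg Fin.val h)
  obtain ⟨M, hM, hme⟩ := hMC.2.2 s(b, a k)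
    ((SimpleGraph.mem_edgeSet _).mpr (hadjb k))
  have hMbk : M.Adj b (a k) := SimpleGraph.Subgraph.mem_edgeSet.mp hme
  have hfb : pmF hM b = a k := pmF_eq hM hMbk
  have hfak : pmF hM (a k) = b := pmF_eq hM hMbk.symm
  have key : ∀ (m : Fin d) (X Bs : Set V), k ≠ m → X.ncard = Bs.ncard →
      nbhd H X = Bs ∪ {b} → b ∉ Bs → (∀ l : Fin d, l ≠ m → a l ∉ X) →
      (pmF hM) '' X = Bs := by
    intro m X Bs hkm hc hN hbB hl
    have hsub : (pmF hM) '' X ⊆ Bs := by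
      rintro v ⟨x, hx, rfl⟩
      have : pmF hM x ∈ nbhd H X := ⟨x, hx, M.adj_sub (pmF_adj hM x)⟩
      rw [hN] at this
      rcases this with h | h
      · exact h
      · exfalso
        have hxb : x = a k := pmF_inj hM ((Set.mem_singleton_iff.mp h).trans hfak.symm)
        exact hl k hkm (hxb ▸ hx)
    apply Set.eq_of_subset_of_ncard_le hsub
    rw [Set.ncard_image_of_injective _ (pmF_inj hM), ← hc]
  have hkeyi : (pmF hM) '' Xi = Bi := key i Xi Bi hki hXic hNi hbBi hmi
  have hkeyj : (pmF hM) '' Xj = Bj := key j Xj Bj hkj hXjc hNj hbBj hmj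
  have hXdisj : Xi ∩ Xj = ∅ := by
    rcases (Xi ∩ Xj).eq_empty_or_nonempty with h | h
    · exact h
    exfalso
    set Z : Set V := Xi ∩ Xj with hZdef
    have hZA : Z ⊆ A := fun v hv => hXiA hv.1
    have hbZ : b ∉ nbhd H Z := by
      rintro ⟨x, ⟨hx1, hx2⟩, hadj⟩
      have : x ∈ H.neighborSet b := hadj.symm
      rw [hnbhd] at this
      obtain ⟨m, rfl⟩ := this
      have hmi' : m = i := by_contra fun hne => hmi m hne hx1
      have hmj' : m = j := by_contra fun hne => hmj m hne hx2
      exact hij (hmi'.symm.trans hmj')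
    have hsubZ : nbhd H Z ⊆ Bi ∩ Bj := by
      intro v hv
      have hvi : v ∈ Bi ∪ {b} := hNi ▸ nbhd_mono Set.inter_subset_left hv
      have hvj : v ∈ Bj ∪ {b} := hNj ▸ nbhd_mono Set.inter_subset_right hv
      have hvb : v ≠ b := fun hvb => hbZ (hvb ▸ hv)
      exact ⟨hvi.resolve_right hvb, hvj.resolve_right hvb⟩
    have hBZ : (Bi ∩ Bj).ncard ≤ Z.ncard := by
      have himg : (pmF hM) '' (Bi ∩ Bj) ⊆ Z := by
        rintro v ⟨y, ⟨hy1, hy2⟩, rfl⟩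
        constructor
        · rw [← hkeyi] at hy1
          obtain ⟨x, hx, rfl⟩ := hy1
          rw [pmF_invol]
          exact hx
        · rw [← hkeyj] at hy2
          obtain ⟨x, hx, rfl⟩ := hy2
          rw [pmF_invol]
          exact hx
      calc (Bi ∩ Bj).ncard = ((pmF hM) '' (Bi ∩ Bj)).ncard :=
            (Set.ncard_image_of_injective _ (pmF_inj hM)).symm
        _ ≤ Z.ncard := Set.ncard_le_ncard himg (Set.toFinite _)
    have hZpr : (A \ Z).Nonempty := by
      refine ⟨a i, haA i, fun hZ => ?_⟩
      exact hmj i hij hZ.2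
    have hSH : Z.ncard + 1 ≤ (nbhd H Z).ncard := strictHall hMC hbip hZA h hZpr
    have : (nbhd H Z).ncard ≤ (Bi ∩ Bj).ncard :=
      Set.ncard_le_ncard hsubZ (Set.toFinite _)
    omega
  constructor
  · exact hXdisj
  · rw [← hkeyi, ← hkeyj, ← Set.image_inter (pmF_inj hM), hXdisj, Set.image_empty]
end LV

/-- the Lovász–Vempala lemma. -/
theorem stmt8 {V : Type*} [Fintype V] (H : SimpleGraph V) (A B : Set V)
    (hMC : MatchingCovered H) (hbip : BipartitionOf H A B)
    (b : V) (hb : b ∈ B) (d : ℕ) (hd : 3 ≤ d)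
    (a : Fin d → V) (hainj : Function.Injective a)
    (hnbhd : H.neighborSet b = Set.range a)
    (r : ℕ) (hr0 : 0 < r) (hrd : r ≤ d)
    (hnonrem : ∀ i : Fin d, i.val < r → ¬ RemovableEdge H s(b, a i)) :
    ∃ SA SB : Fin (r + 1) → Set V,
      (⋃ i, SA i) = A ∧ (⋃ i, SB i) = B ∧
      (Pairwise fun i j => Disjoint (SA i) (SA j)) ∧
      (Pairwise fun i j => Disjoint (SB i) (SB j)) ∧
      b ∈ SB 0 ∧
      ∀ i : Fin d, ∀ h : i.val < r,
        (SA ⟨i.val + 1, by omega⟩).Nonempty ∧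
        (SB ⟨i.val + 1, by omega⟩).Nonempty ∧
        (SA ⟨i.val + 1, by omega⟩).ncard = (SB ⟨i.val + 1, by omega⟩).ncard ∧
        a i ∈ SA ⟨i.val + 1, by omega⟩ ∧
        {v : V | ∃ x ∈ SA ⟨i.val + 1, by omega⟩, H.Adj x v} =
          SB ⟨i.val + 1, by omega⟩ ∪ {b} := by
  classical
  have hext : ∀ jj : Fin r, ∃ X Bi : Set V,
      X ⊆ A ∧ Bi ⊆ B ∧ a ⟨jj.val, lt_of_lt_of_le jj.isLt hrd⟩ ∈ X ∧ b ∉ Bi ∧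
      X.ncard = Bi.ncard ∧ nbhd H X = Bi ∪ {b} ∧
      (∀ m : Fin d, m ≠ ⟨jj.val, lt_of_lt_of_le jj.isLt hrd⟩ → a m ∉ X) := by
    intro jj
    exact extract hMC hbip hb hd hainj hnbhd ⟨jj.val, lt_of_lt_of_le jj.isLt hrd⟩
      (hnonrem ⟨jj.val, lt_of_lt_of_le jj.isLt hrd⟩ jj.isLt)
  choose Xs Bs hXA hBB hain hbB hcard hN hnot using hext
  have hdisj : ∀ jj kk : Fin r, jj ≠ kk → Xs jj ∩ Xs kk = ∅ ∧ Bs jj ∩ Bs kk = ∅ := by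
    intro jj kk hne
    have hij : (⟨jj.val, lt_of_lt_of_le jj.isLt hrd⟩ : Fin d) ≠
        ⟨kk.val, lt_of_lt_of_le kk.isLt hrd⟩ := by
      intro h
      simp only [Fin.mk.injEq] at h
      exact hne (Fin.ext h)
    exact disjointXB hMC hbip hb hd hainj hnbhd hij (hXA jj) (hcard jj) (hN jj)
      (hbB jj) (hnot jj) (hXA kk) (hcard kk) (hN kk) (hbB kk) (hnot kk)
  refine ⟨(fun j => if h : j.val = 0 then A \ ⋃ t, Xs t
      else Xs ⟨j.val - 1, by have := j.isLt; omega⟩),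
    (fun j => if h : j.val = 0 then B \ ⋃ t, Bs t
      else Bs ⟨j.val - 1, by have := j.isLt; omega⟩), ?_, ?_, ?_, ?_, ?_, ?_⟩
  · apply Set.Subset.antisymm
    · intro v hv
      obtain ⟨j, hj⟩ := Set.mem_iUnion.mp hv
      by_cases h0 : j.val = 0
      · simp only [dif_pos h0] at hj; exact hj.1
      · simp only [dif_neg h0] at hj; exact hXA _ hj
    · intro v hv
      by_cases hU : v ∈ ⋃ t, Xs t
      · obtain ⟨t, ht⟩ := Set.mem_iUnion.mp hU
        apply Set.mem_iUnion.mpr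
        refine ⟨⟨t.val + 1, by have := t.isLt; omega⟩, ?_⟩
        simp only [dif_neg (show ¬(((⟨t.val + 1, by have := t.isLt; omega⟩ : Fin (r+1))).val = 0) by simp)]
        have heq : (⟨t.val + 1 - 1, by omega⟩ : Fin r) = t := Fin.ext (by simp)
        simpa [heq] using ht
      · apply Set.mem_iUnion.mpr
        exact ⟨0, by simp only [dif_pos (show ((0 : Fin (r+1)).val = 0) from rfl)]; exact ⟨hv, hU⟩⟩
  · apply Set.Subset.antisymm
    · intro v hv
      obtain ⟨j, hj⟩ := Set.mem_iUnion.mp hv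
      by_cases h0 : j.val = 0
      · simp only [dif_pos h0] at hj; exact hj.1
      · simp only [dif_neg h0] at hj; exact hBB _ hj
    · intro v hv
      by_cases hU : v ∈ ⋃ t, Bs t
      · obtain ⟨t, ht⟩ := Set.mem_iUnion.mp hU
        apply Set.mem_iUnion.mpr
        refine ⟨⟨t.val + 1, by have := t.isLt; omega⟩, ?_⟩
        simp only [dif_neg (show ¬(((⟨t.val + 1, by have := t.isLt; omega⟩ : Fin (r+1))).val = 0) by simp)]
        have heq : (⟨t.val + 1 - 1, by omega⟩ : Fin r) = t := Fin.ext (by simp)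
        simpa [heq] using ht
      · apply Set.mem_iUnion.mpr
        exact ⟨0, by simp only [dif_pos (show ((0 : Fin (r+1)).val = 0) from rfl)]; exact ⟨hv, hU⟩⟩
  · intro j k hjk
    by_cases h0 : j.val = 0
    · have hk0 : ¬ k.val = 0 := fun h => hjk (Fin.ext (h0.trans h.symm))
      simp only [dif_pos h0, dif_neg hk0]
      exact Set.disjoint_sdiff_left.mono_right (Set.subset_iUnion Xs _)
    · by_cases hk0 : k.val = 0
      · simp only [dif_neg h0, dif_pos hk0]
        exact (Set.disjoint_sdiff_left.mono_right (Set.subset_iUnion Xs _)).symm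
      · simp only [dif_neg h0, dif_neg hk0]
        apply Set.disjoint_iff_inter_eq_empty.mpr
        apply (hdisj _ _ _).1
        intro h
        have := congrArg Fin.val h
        simp only at this
        exact hjk (Fin.ext (by omega))
  · intro j k hjk
    by_cases h0 : j.val = 0
    · have hk0 : ¬ k.val = 0 := fun h => hjk (Fin.ext (h0.trans h.symm))
      simp only [dif_pos h0, dif_neg hk0]
      exact Set.disjoint_sdiff_left.mono_right (Set.subset_iUnion Bs _)
    · by_cases hk0 : k.val = 0
      · simp only [dif_neg h0, dif_pos hk0]
        exact (Set.disjoint_sdiff_left.mono_right (Set.subset_iUnion Bs _)).symm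
      · simp only [dif_neg h0, dif_neg hk0]
        apply Set.disjoint_iff_inter_eq_empty.mpr
        apply (hdisj _ _ _).2
        intro h
        have := congrArg Fin.val h
        simp only at this
        exact hjk (Fin.ext (by omega))
  · simp only [dif_pos (show ((0 : Fin (r+1)).val = 0) from rfl)]
    refine ⟨hb, fun h => ?_⟩
    obtain ⟨t, ht⟩ := Set.mem_iUnion.mp h
    exact hbB t ht
  · intro i h
    have hne : ¬ ((⟨i.val + 1, by omega⟩ : Fin (r + 1)).val = 0) := by simp
    simp only [dif_neg hne]
    set jr : Fin r := ⟨(⟨i.val + 1, by omega⟩ : Fin (r + 1)).val - 1, by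
      have : i.val + 1 - 1 < r := by omega
      simpa using this⟩ with hjr
    have hjv : jr.val = i.val := by simp [hjr]
    have hidx : (⟨jr.val, lt_of_lt_of_le jr.isLt hrd⟩ : Fin d) = i := Fin.ext hjv
    have haiX : a i ∈ Xs jr := by
      have := hain jr
      rwa [hidx] at this
    refine ⟨⟨a i, haiX⟩, ?_, hcard jr, haiX, ?_⟩
    · have h1 : 0 < (Xs jr).ncard := (Set.ncard_pos (Set.toFinite _)).mpr ⟨a i, haiX⟩
      have h2 : 0 < (Bs jr).ncard := by rw [← hcard jr]; exact h1
      exact (Set.ncard_pos (Set.toFinite _)).mp h2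
    · exact hN jr
end
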